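/- arXiv:1107.2429 — 7 statements merged into one kernel-verified Lean document; each statement's English description precedes it below -/
import Mathlib

section
/- Let R be a ring with prime subring P (the subring of R generated by 1), let M be a submonoid of the group of units U(R), and let C be a subring of R. Assume: (1) distinct elements of M are linearly independent over P in R (equivalently, the subring of R generated by P and M is the monoid ring P[M]); (2) for every c ∈ C and every element f of the subring of R generated by P and M, the equality cf = 0 implies c = 0 or f = 0; (3) every element of M commutes with every element of C; (4) M is an orderable monoid; (5) there exist a group H and an injective monoid homomorphism M → H such that the subgroup of H generated by the image of M has trivial center. Then distinct elements of M are linearly independent over C in R; equivalently, the subring of R generated by C and M is the monoid ring C[M], i.e., the canonical ring homomorphism from the monoid ring C[M] to R extending the inclusions of C and of M is injective. -/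
set_option linter.unusedSectionVars false

namespace S0

open Finset MonoidAlgebra

section LMT

variable {k : Type*} [CommRing k] [IsDomain k]
variable {G : Type*} [Monoid G] [LinearOrder G]
variable (hL : ∀ ⦃a b : G⦄ (c : G), a < b → c*a < c*b)
variable (hR : ∀ ⦃a b : G⦄ (c : G), a < b → a*c < b*c)

/-- leading monomial -/
noncomputable def lmon (x : MonoidAlgebra k G) (hx : x ≠ 0) : G :=
  x.coeff.support.max' (Finsupp.support_nonempty_iff.mpr (mt MonoidAlgebra.coeff_eq_zero.mp hx))

theorem lmon_mem (x : MonoidAlgebra k G) (hx : x ≠ 0) : lmon x hx ∈ x.coeff.support :=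
  Finset.max'_mem _ _

theorem le_lmon (x : MonoidAlgebra k G) (hx : x ≠ 0) {a : G} (ha : a ∈ x.coeff.support) :
    a ≤ lmon x hx := Finset.le_max' _ _ ha

theorem lmon_coeff_ne (x : MonoidAlgebra k G) (hx : x ≠ 0) : x.coeff (lmon x hx) ≠ 0 :=
  Finsupp.mem_support_iff.mp (lmon_mem x hx)

include hL in
theorem mul_le_left {a b : G} (c : G) (h : a ≤ b) : c*a ≤ c*b := by
  rcases eq_or_lt_of_le h with rfl | h
  · exact le_rfl
  · exact (hL c h).le

include hR in
theorem mul_le_right {a b : G} (c : G) (h : a ≤ b) : a*c ≤ b*c := by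
  rcases eq_or_lt_of_le h with rfl | h
  · exact le_rfl
  · exact (hR c h).le

include hL hR in
theorem mul_lt_top {a b u v : G} (hu : a ≤ u) (hv : b ≤ v) (hne : ¬(a = u ∧ b = v)) :
    a * b < u * v := by
  rcases eq_or_lt_of_le hu with rfl | hu'
  · rcases eq_or_lt_of_le hv with rfl | hv'
    · exact absurd ⟨rfl, rfl⟩ hne
    · exact hL a hv'
  · exact lt_of_lt_of_le (hR b hu') (mul_le_left hL u hv)

include hL hR in
theorem mul_coeff_top (x y : MonoidAlgebra k G) (hx : x ≠ 0) (hy : y ≠ 0) :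
    (x*y).coeff (lmon x hx * lmon y hy) = x.coeff (lmon x hx) * y.coeff (lmon y hy) := by
  classical
  rw [MonoidAlgebra.coeff_mul]
  rw [Finsupp.sum]
  rw [Finset.sum_eq_single_of_mem (lmon x hx) (lmon_mem x hx)]
  · rw [Finsupp.sum]
    rw [Finset.sum_eq_single_of_mem (lmon y hy) (lmon_mem y hy)]
    · rw [if_pos rfl]
    · intro b hb hbne
      rw [if_neg]
      exact ne_of_lt (mul_lt_top hL hR le_rfl (le_lmon y hy hb) (by simp [hbne]))
  · intro a ha hane
    apply Finset.sum_eq_zero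
    intro b hb
    dsimp only
    rw [if_neg]
    exact ne_of_lt (mul_lt_top hL hR (le_lmon x hx ha) (le_lmon y hy hb)
      (fun hc => hane hc.1))

include hL hR in
theorem mul_supp_le (x y : MonoidAlgebra k G) (hx : x ≠ 0) (hy : y ≠ 0) {t : G}
    (ht : t ∈ (x*y).coeff.support) : t ≤ lmon x hx * lmon y hy := by
  classical
  have := MonoidAlgebra.support_coeff_mul_subset x y ht
  rw [Finset.mem_mul] at this
  obtain ⟨a, ha, b, hb, rfl⟩ := this
  exact le_trans (mul_le_right hR b (le_lmon x hx ha)) (mul_le_left hL _ (le_lmon y hy hb))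

include hL hR in
theorem mul_ne_zero' (x y : MonoidAlgebra k G) (hx : x ≠ 0) (hy : y ≠ 0) : x*y ≠ 0 := by
  intro h
  apply mul_ne_zero (lmon_coeff_ne x hx) (lmon_coeff_ne y hy)
  rw [← mul_coeff_top hL hR x y hx hy, h, MonoidAlgebra.coeff_zero, Finsupp.coe_zero, Pi.zero_apply]

include hL hR in
theorem lmon_mul (x y : MonoidAlgebra k G) (hx : x ≠ 0) (hy : y ≠ 0) :
    lmon (x*y) (mul_ne_zero' hL hR x y hx hy) = lmon x hx * lmon y hy := by
  apply le_antisymm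
  · exact mul_supp_le hL hR x y hx hy (lmon_mem _ _)
  · apply le_lmon
    rw [Finsupp.mem_support_iff, mul_coeff_top hL hR x y hx hy]
    exact mul_ne_zero (lmon_coeff_ne x hx) (lmon_coeff_ne y hy)

theorem single_ne_zero' (m : G) : (single m (1:k) : MonoidAlgebra k G) ≠ 0 := by
  simp [MonoidAlgebra.single_eq_zero]

theorem lmon_single (m : G) : lmon (single m (1:k)) (single_ne_zero' m) = m := by
  have : (single m (1:k)).coeff.support = {m} := Finsupp.support_single_ne_zero m one_ne_zero
  unfold lmon
  simp [this]

include hL hR in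
theorem triple_ne_zero (x y : MonoidAlgebra k G) (hx : x ≠ 0) (hy : y ≠ 0) (m : G) :
    x * single m (1:k) * y ≠ 0 :=
  mul_ne_zero' hL hR _ y (mul_ne_zero' hL hR x _ hx (single_ne_zero' m)) hy

include hL hR in
theorem lmon_triple (x y : MonoidAlgebra k G) (hx : x ≠ 0) (hy : y ≠ 0) (m : G) :
    lmon (x * single m (1:k) * y) (triple_ne_zero hL hR x y hx hy m)
      = lmon x hx * m * lmon y hy := by
  rw [lmon_mul hL hR _ y (mul_ne_zero' hL hR x _ hx (single_ne_zero' m)) hy,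
    lmon_mul hL hR x _ hx (single_ne_zero' m), lmon_single]

include hL hR in
theorem ml_cofinite (Ex : Set G)
    (mLem : ∀ u v : G, (∀ m ∉ Ex, u*m*v = v*m*u) → u = v)
    {f g : MonoidAlgebra k G} (hf : f ≠ 0) (hg : g ≠ 0)
    (hcomm : ∀ m ∉ Ex, f * single m (1:k) * g = g * single m (1:k) * f) :
    g.coeff (lmon g hg) • f = f.coeff (lmon f hf) • g := by
  have keylm : ∀ (p q : MonoidAlgebra k G) (hp : p ≠ 0) (hq : q ≠ 0),
      (∀ m ∉ Ex, p * single m (1:k) * q = q * single m (1:k) * p) →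
      lmon p hp = lmon q hq := by
    intro p q hp hq hpq
    apply mLem
    intro m hm
    have h1 := lmon_triple hL hR p q hp hq m
    have h2 := lmon_triple hL hR q p hq hp m
    rw [← h1, ← h2]
    congr 1
    exact hpq m hm
  have hu : lmon f hf = lmon g hg := keylm f g hf hg hcomm
  set u := lmon f hf with hudef
  set a := f.coeff u with hadef
  set b := g.coeff (lmon g hg) with hbdef
  by_cases h0 : b • f - a • g = 0
  · exact sub_eq_zero.mp h0
  · exfalso
    have hcm : ∀ m ∉ Ex, (b • f - a • g) * single m (1:k) * g
        = g * single m (1:k) * (b • f - a • g) := by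
      intro m hm
      rw [sub_mul, sub_mul, mul_sub]
      rw [smul_mul_assoc, smul_mul_assoc, smul_mul_assoc, smul_mul_assoc,
        mul_smul_comm, mul_smul_comm]
      rw [hcomm m hm]
    have hlm := keylm _ _ h0 hg hcm
    have hmemb := lmon_mem _ h0
    rw [hlm, ← hu] at hmemb
    rw [Finsupp.mem_support_iff] at hmemb
    apply hmemb
    have : (b • f - a • g).coeff u = b * f.coeff u - a * g.coeff u := by
      rw [MonoidAlgebra.coeff_sub, Finsupp.sub_apply, MonoidAlgebra.coeff_smul_apply,
          MonoidAlgebra.coeff_smul_apply, smul_eq_mul, smul_eq_mul]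
    rw [this, ← hadef]
    have : g.coeff u = b := by rw [hbdef, hu]
    rw [this, mul_comm]
    ring

end LMT

section MLem

variable {G : Type*} [Monoid G] {H : Type*} [Group H] (φ : G →* H)

include φ in
theorem mlem (hφ : Function.Injective φ)
    (h5 : Subgroup.center ↥(Subgroup.closure (Set.range φ)) = ⊥)
    [Infinite G] (Ex : Set G) (hEx : Ex.Finite) (u v : G)
    (h : ∀ m ∉ Ex, u*m*v = v*m*u) : u = v := by
  have hlcancel : ∀ x : G, Function.Injective (fun m => x * m) := by
    intro x m m' hmm
    apply hφ
    have := congrArg φ hmm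
    simp only [map_mul] at this
    exact mul_left_cancel this
  have key : ∀ x : G, Commute (φ x) ((φ u)⁻¹ * φ v) := by
    intro x
    obtain ⟨m, hm⟩ : ∃ m, m ∉ Ex ∧ x * m ∉ Ex := by
      have hfin : (Ex ∪ (fun m => x * m) ⁻¹' Ex).Finite :=
        hEx.union (hEx.preimage ((hlcancel x).injOn))
      obtain ⟨m, hm⟩ := hfin.infinite_compl.nonempty
      exact ⟨m, fun hc => hm (Or.inl hc), fun hc => hm (Or.inr hc)⟩
    have e2 : φ u * φ m * φ v = φ v * φ m * φ u := by
      have := congrArg φ (h m hm.1)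
      simpa [map_mul] using this
    have e1 : φ u * (φ x * φ m) * φ v = φ v * (φ x * φ m) * φ u := by
      have := congrArg φ (h (x*m) hm.2)
      simpa [map_mul, mul_assoc] using this
    set S := φ u; set T := φ v; set X := φ x; set Mm := φ m
    have h7 : S * X * S⁻¹ * T = T * X := by
      apply mul_right_cancel (b := Mm * S)
      calc S * X * S⁻¹ * T * (Mm * S) = S * X * S⁻¹ * (T * Mm * S) := by group
      _ = S * X * S⁻¹ * (S * Mm * T) := by rw [← e2]
      _ = S * (X * Mm) * T := by group
      _ = T * (X * Mm) * S := e1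
      _ = T * X * (Mm * S) := by group
    show X * (S⁻¹ * T) = (S⁻¹ * T) * X
    calc X * (S⁻¹ * T) = S⁻¹ * (S * X * S⁻¹ * T) := by group
    _ = S⁻¹ * (T * X) := by rw [h7]
    _ = (S⁻¹ * T) * X := by group
  set Q := (φ u)⁻¹ * φ v with hQ
  have hQmem : Q ∈ Subgroup.closure (Set.range φ) := by
    apply mul_mem
    · exact inv_mem (Subgroup.subset_closure ⟨u, rfl⟩)
    · exact Subgroup.subset_closure ⟨v, rfl⟩
  have hQcomm : ∀ g ∈ Subgroup.closure (Set.range φ), g * Q = Q * g := by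
    intro g hg
    induction hg using Subgroup.closure_induction with
    | mem y hy => obtain ⟨x, rfl⟩ := hy; exact key x
    | one => simp
    | mul y z _ _ hy hz => rw [mul_assoc, hz, ← mul_assoc, hy, mul_assoc]
    | inv y _ hy => exact Commute.inv_left hy
  have : (⟨Q, hQmem⟩ : Subgroup.closure (Set.range φ)) ∈
      Subgroup.center ↥(Subgroup.closure (Set.range φ)) := by
    rw [Subgroup.mem_center_iff]
    intro g
    ext
    exact hQcomm g.1 g.2
  rw [h5] at this
  rw [Subgroup.mem_bot] at this
  have hQ1 : Q = 1 := congrArg Subtype.val this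
  apply hφ
  rw [hQ] at hQ1
  exact inv_mul_eq_one.mp hQ1

end MLem

section Setup

variable (R : Type*) [Ring R]

/-- The prime ring as a quotient of `ℤ`. -/
def Pr : Type _ := ℤ ⧸ RingHom.ker (Int.castRingHom R)

noncomputable instance : CommRing (Pr R) := Ideal.Quotient.commRing _

/-- The embedding of the prime ring into `R`. -/
noncomputable def iP : Pr R →+* R := RingHom.kerLift (Int.castRingHom R)

theorem iP_injective : Function.Injective (iP R) := RingHom.kerLift_injective _

theorem Pr_surjective : Function.Surjective
    (Ideal.Quotient.mk (RingHom.ker (Int.castRingHom R))) := Ideal.Quotient.mk_surjective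

theorem iP_mk (n : ℤ) :
    iP R (Ideal.Quotient.mk (RingHom.ker (Int.castRingHom R)) n) = (n : R) :=
  RingHom.kerLift_mk _ n

theorem iP_comm (p : Pr R) (x : R) : Commute (iP R p) x := by
  obtain ⟨n, rfl⟩ := Pr_surjective R p
  rw [iP_mk]
  exact Int.cast_commute n x

theorem iP_mem_bot (p : Pr R) : iP R p ∈ (⊥ : Subring R) := by
  obtain ⟨n, rfl⟩ := Pr_surjective R p
  rw [iP_mk]
  exact Subring.mem_bot.mpr ⟨n, rfl⟩

theorem nontrivial_Pr [Nontrivial R] : Nontrivial (Pr R) := by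
  refine ⟨0, 1, fun h => ?_⟩
  have := congrArg (iP R) h
  rw [map_zero, map_one] at this
  exact zero_ne_one this

variable (M : Submonoid Rˣ) (C : Subring R)

/-- monomials as elements of `R`. -/
def nu : ↥M →* R := (Units.coeHom R).comp M.subtype

theorem nu_injective : Function.Injective (nu R M) := by
  intro a b hab
  exact Subtype.ext (Units.ext hab)

theorem nu_mem (m : ↥M) : nu R M m ∈ Units.val '' (M : Set Rˣ) := ⟨m.1, m.2, rfl⟩

theorem isDomain_Pr [Nontrivial R]
    (h2 : ∀ c ∈ C, ∀ f ∈ Subring.closure (Units.val '' (M : Set Rˣ)),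
      c * f = 0 → c = 0 ∨ f = 0) : IsDomain (Pr R) := by
  haveI := nontrivial_Pr R
  haveI : NoZeroDivisors (Pr R) := by
    constructor
    intro x y hxy
    have hR0 : iP R x * iP R y = 0 := by rw [← map_mul, hxy, map_zero]
    have hx : iP R x ∈ C := (show (⊥ : Subring R) ≤ C from bot_le) (iP_mem_bot R x)
    have hy : iP R y ∈ Subring.closure (Units.val '' (M : Set Rˣ)) :=
      (show (⊥ : Subring R) ≤ _ from bot_le) (iP_mem_bot R y)
    rcases h2 _ hx _ hy hR0 with h | h
    · exact Or.inl (iP_injective R (by rw [h, map_zero]))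
    · exact Or.inr (iP_injective R (by rw [h, map_zero]))
  exact NoZeroDivisors.to_isDomain _

/-- The canonical map from the monoid algebra over the prime ring to `R`. -/
noncomputable def Th : MonoidAlgebra (Pr R) ↥M →+* R :=
  MonoidAlgebra.liftNCRingHom (iP R) (nu R M) (fun p m => iP_comm R p _)

theorem Th_single (m : ↥M) (p : Pr R) :
    Th R M (MonoidAlgebra.single m p) = iP R p * nu R M m :=
  MonoidAlgebra.liftNC_single _ _ _ _

theorem Th_single_one (m : ↥M) :
    Th R M (MonoidAlgebra.single m (1 : Pr R)) = nu R M m := by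
  rw [Th_single, map_one, one_mul]

theorem Th_apply (x : MonoidAlgebra (Pr R) ↥M) :
    Th R M x = ∑ m ∈ x.coeff.support, iP R (x.coeff m) * nu R M m := by
  conv_lhs => rw [← MonoidAlgebra.sum_coeff_single x]
  rw [map_finsuppSum, Finsupp.sum]
  exact Finset.sum_congr rfl fun m _ => Th_single R M m (x.coeff m)

theorem Th_comm_C
    (h3 : ∀ c ∈ C, ∀ u : Rˣ, u ∈ M → c * (u : R) = (u : R) * c)
    (x : MonoidAlgebra (Pr R) ↥M) {c : R} (hc : c ∈ C) :
    Commute (Th R M x) c := by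
  rw [Th_apply]
  apply Commute.sum_left
  intro m _
  exact Commute.mul_left (iP_comm R _ c) ((h3 c hc m.1 m.2).symm)

theorem Th_mem_closure (x : MonoidAlgebra (Pr R) ↥M) :
    Th R M x ∈ Subring.closure (Units.val '' (M : Set Rˣ)) := by
  rw [Th_apply]
  apply Subring.sum_mem
  intro m _
  exact Subring.mul_mem _ ((show (⊥ : Subring R) ≤ _ from bot_le) (iP_mem_bot R _))
    (Subring.subset_closure (nu_mem R M m))

end Setup

section Key

set_option maxHeartbeats 1600000 in
theorem key (R : Type*) [Ring R] [Nontrivial R] (M : Submonoid Rˣ) (C : Subring R)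
    (h2 : ∀ c ∈ C, ∀ f ∈ Subring.closure (Units.val '' (M : Set Rˣ)),
      c * f = 0 → c = 0 ∨ f = 0)
    (h3 : ∀ c ∈ C, ∀ u : Rˣ, u ∈ M → c * (u : R) = (u : R) * c)
    [LinearOrder ↥M]
    (hL : ∀ ⦃a b : ↥M⦄ (c : ↥M), a < b → c*a < c*b)
    (hR : ∀ ⦃a b : ↥M⦄ (c : ↥M), a < b → a*c < b*c)
    (H : Type*) [Group H] (φ : ↥M →* H) (hφ : Function.Injective φ)
    (h5 : Subgroup.center ↥(Subgroup.closure (Set.range φ)) = ⊥)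
    [Infinite ↥M]
    (hΘinj : Function.Injective (Th R M))
    (k : ℕ) (f : Fin k → MonoidAlgebra (Pr R) ↥M) (hf : LinearIndependent (Pr R) f)
    (c : Fin k → C) (hrel : ∑ i, (Th R M) (f i) * ((c i : R)) = 0) : ∀ i, c i = 0 := by
  classical
  haveI hdom : IsDomain (Pr R) := isDomain_Pr R M C h2
  induction k using Nat.strong_induction_on with
  | _ k IH =>
  by_contra hcon
  push_neg at hcon
  obtain ⟨i₀, hi₀⟩ := hcon
  set S : Finset (Fin k) := Finset.univ.filter (fun i => c i ≠ 0) with hS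
  have hi₀S : i₀ ∈ S := Finset.mem_filter.mpr ⟨Finset.mem_univ _, hi₀⟩
  have hsum_eq : ∑ i ∈ S, Th R M (f i) * ((c i : R)) = 0 := by
    rw [← hrel]
    apply Finset.sum_subset (Finset.subset_univ S)
    intro i _ hiS
    have : c i = 0 := by
      by_contra hne
      exact hiS (Finset.mem_filter.mpr ⟨Finset.mem_univ _, hne⟩)
    rw [this]
    simp
  by_cases hcard : S.card < k
  · -- restrict to the nonzero coefficients and use the induction hypothesis
    set e := S.orderIsoOfFin rfl with he
    have hror : ∀ j, ((e j : Fin k)) ∈ S := fun j => (e j).2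
    have hresinj : Function.Injective (fun j => ((e j : Fin k))) := by
      intro a b hab
      exact e.injective (Subtype.ext hab)
    have hres := IH S.card hcard (fun j => f (e j)) (hf.comp _ hresinj) (fun j => c (e j))
      (by
        rw [← hsum_eq]
        rw [← Finset.sum_coe_sort S (fun i => Th R M (f i) * ((c i : R)))]
        exact (Equiv.sum_comp e.toEquiv (fun t => Th R M (f t) * ((c (t : Fin k) : R)))).symm ▸ rfl)
    have h0 : (0 : ℕ) < S.card := Finset.card_pos.mpr ⟨i₀, hi₀S⟩
    have hc0 : c ((e ⟨0, h0⟩ : Fin k)) = 0 := hres ⟨0, h0⟩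
    exact (Finset.mem_filter.mp (hror ⟨0, h0⟩)).2 hc0
  -- now all coefficients are nonzero
  have hcard' : S.card = k := by
    have : S.card ≤ k := by simpa using Finset.card_le_univ S
    omega
  have hSuniv : S = Finset.univ := Finset.eq_univ_of_card S (by rw [hcard', Fintype.card_fin])
  have hall : ∀ i, c i ≠ 0 := by
    intro i
    have : i ∈ S := hSuniv ▸ Finset.mem_univ i
    exact (Finset.mem_filter.mp this).2
  clear hcard hcard' hSuniv hsum_eq hi₀S hi₀ hS
  rcases k with _ | k
  · exact i₀.elim0
  rcases k with _ | k0
  · -- k = 1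
    have h1rel : Th R M (f 0) * ((c 0 : R)) = 0 := by
      rw [← hrel, Fin.sum_univ_one]
    have hcomm := Th_comm_C R M C h3 (f 0) (c 0).2
    have hflip : (c 0 : R) * Th R M (f 0) = 0 := by
      rw [← hcomm.eq]
      exact h1rel
    rcases h2 _ (c 0).2 _ (Th_mem_closure R M (f 0)) hflip with h | h
    · exact hall 0 (Subtype.ext h)
    · exact hf.ne_zero 0 (hΘinj (by rw [h, map_zero]))
  -- k = k0 + 2 : the main machine
  set f0 := f 0 with hf0def
  have hf0ne : f0 ≠ 0 := hf.ne_zero 0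
  set tail : Fin (k0+1) → MonoidAlgebra (Pr R) ↥M := fun i => f i.succ with htaildef
  have htail : LinearIndependent (Pr R) tail := hf.comp Fin.succ (Fin.succ_injective _)
  have death : ∀ w : MonoidAlgebra (Pr R) ↥M,
      ∃ F ∈ Submodule.span (Pr R) (Set.range tail), F ≠ 0 ∧ f0 * w * F = F * w * f0 := by
    intro w
    have grel : ∑ i : Fin (k0+1),
        Th R M (f0 * w * tail i - tail i * w * f0) * ((c i.succ : R)) = 0 := by
      have hA : ∑ i, Th R M (f0 * w * f i) * ((c i : R)) = 0 := by
        have : Th R M (f0 * w) * (∑ i, Th R M (f i) * ((c i : R))) = 0 := by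
          rw [hrel, mul_zero]
        rw [Finset.mul_sum] at this
        rw [← this]
        apply Finset.sum_congr rfl
        intro i _
        rw [map_mul, mul_assoc]
      have hB : ∑ i, Th R M (f i * w * f0) * ((c i : R)) = 0 := by
        have : (∑ i, Th R M (f i) * ((c i : R))) * Th R M (w * f0) = 0 := by
          rw [hrel, zero_mul]
        rw [Finset.sum_mul] at this
        rw [← this]
        apply Finset.sum_congr rfl
        intro i _
        have hc := Th_comm_C R M C h3 (w * f0) (c i).2
        rw [show f i * w * f0 = f i * (w * f0) from mul_assoc _ _ _, map_mul]
        rw [mul_assoc, hc.eq, ← mul_assoc]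
      have hAB : ∑ i : Fin (k0+2),
          Th R M (f0 * w * f i - f i * w * f0) * ((c i : R)) = 0 := by
        have : ∑ i : Fin (k0+2), (Th R M (f0 * w * f i) * ((c i : R))
            - Th R M (f i * w * f0) * ((c i : R))) = 0 := by
          rw [Finset.sum_sub_distrib, hA, hB, sub_zero]
        rw [← this]
        apply Finset.sum_congr rfl
        intro i _
        rw [map_sub, sub_mul]
      rw [Fin.sum_univ_succ] at hAB
      have h0term : Th R M (f0 * w * f 0 - f 0 * w * f0) * ((c 0 : R)) = 0 := by
        rw [← hf0def, sub_self, map_zero, zero_mul]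
      rw [h0term, zero_add] at hAB
      exact hAB
    by_cases hgind : LinearIndependent (Pr R)
        (fun i : Fin (k0+1) => f0 * w * tail i - tail i * w * f0)
    · exfalso
      have := IH (k0+1) (by omega) _ hgind (fun i => c i.succ) grel
      exact hall 1 (this 0)
    · rw [Fintype.not_linearIndependent_iff] at hgind
      obtain ⟨μ, hμsum, iμ, hiμ⟩ := hgind
      refine ⟨∑ i, μ i • tail i, ?_, ?_, ?_⟩
      · exact Submodule.sum_mem _
          (fun i _ => Submodule.smul_mem _ _ (Submodule.subset_span ⟨i, rfl⟩))
      · intro hFz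
        exact hiμ (Fintype.linearIndependent_iff.mp htail μ hFz iμ)
      · have expand : ∑ i, μ i • (f0 * w * tail i - tail i * w * f0)
            = f0 * w * (∑ i, μ i • tail i) - (∑ i, μ i • tail i) * w * f0 := by
          rw [Finset.mul_sum, Finset.sum_mul, Finset.sum_mul, ← Finset.sum_sub_distrib]
          apply Finset.sum_congr rfl
          intro i _
          rw [smul_sub, mul_smul_comm, smul_mul_assoc, smul_mul_assoc]
        rw [expand] at hμsum
        exact sub_eq_zero.mp hμsum
  -- base change to the fraction field of the prime ring
  set K := FractionRing (Pr R) with hKdef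
  letI : Field K := inferInstanceAs (Field (FractionRing (Pr R)))
  letI : Algebra (Pr R) K := inferInstanceAs (Algebra (Pr R) (FractionRing (Pr R)))
  letI : IsFractionRing (Pr R) K :=
    inferInstanceAs (IsFractionRing (Pr R) (FractionRing (Pr R)))
  have hcommι : ∀ (p : Pr R) (mm : ↥M),
      Commute ((MonoidAlgebra.singleOneRingHom.comp (algebraMap (Pr R) K)) p)
        (MonoidAlgebra.of K ↥M mm) := by
    intro p mm
    exact MonoidAlgebra.single_commute Commute.one_left (Commute.all _) _
  set ι : MonoidAlgebra (Pr R) ↥M →+* MonoidAlgebra K ↥M :=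
    MonoidAlgebra.liftNCRingHom
      (MonoidAlgebra.singleOneRingHom.comp (algebraMap (Pr R) K))
      (MonoidAlgebra.of K ↥M) hcommι with hιdef
  have ι_single : ∀ (a : ↥M) (b : Pr R),
      ι (MonoidAlgebra.single a b) = MonoidAlgebra.single a (algebraMap (Pr R) K b) := by
    intro a b
    show MonoidAlgebra.liftNC _ _ _ = _
    rw [MonoidAlgebra.liftNC_single]
    show MonoidAlgebra.single 1 (algebraMap (Pr R) K b) * MonoidAlgebra.single a 1 = _
    rw [MonoidAlgebra.single_mul_single, one_mul, mul_one]
  have ι_apply : ∀ (x : MonoidAlgebra (Pr R) ↥M) (t : ↥M),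
      (ι x).coeff t = algebraMap (Pr R) K (x.coeff t) := by
    intro x t
    induction x using MonoidAlgebra.induction_linear with
    | zero => simp
    | add a b ha hb =>
      rw [map_add]
      rw [show ((a + b : MonoidAlgebra (Pr R) ↥M).coeff t) = a.coeff t + b.coeff t from
            Finsupp.add_apply a.coeff b.coeff t]
      rw [show ((ι a + ι b : MonoidAlgebra K ↥M).coeff t) = (ι a).coeff t + (ι b).coeff t from
            Finsupp.add_apply _ _ t]
      rw [ha, hb, map_add]
    | single a b =>
      rw [ι_single]
      rw [MonoidAlgebra.coeff_single, MonoidAlgebra.coeff_single, Finsupp.single_apply,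
          Finsupp.single_apply]
      split
      · rfl
      · rw [map_zero]
  have halginj : Function.Injective (algebraMap (Pr R) K) := IsFractionRing.injective _ _
  have ι_inj : Function.Injective ι := by
    intro a b hab
    ext t
    apply halginj
    rw [← ι_apply, ← ι_apply, hab]
  have ι_supp : ∀ x : MonoidAlgebra (Pr R) ↥M, (ι x).coeff.support = x.coeff.support := by
    intro x
    ext t
    rw [Finsupp.mem_support_iff, Finsupp.mem_support_iff, ι_apply]
    constructor
    · intro h hc
      exact h (by rw [hc, map_zero])
    · intro h hc
      exact h (halginj (by rw [hc, map_zero]))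
  have ι_smul : ∀ (p : Pr R) (x : MonoidAlgebra (Pr R) ↥M),
      ι (p • x) = algebraMap (Pr R) K p • ι x := by
    intro p x
    ext t
    rw [ι_apply, MonoidAlgebra.coeff_smul_apply, MonoidAlgebra.coeff_smul_apply, ι_apply,
        smul_eq_mul, smul_eq_mul,
      map_mul]
  -- the finite-dimensional space of candidate "killers"
  set VK : Submodule K (MonoidAlgebra K ↥M) :=
    Submodule.span K (Set.range (fun i => ι (tail i))) with hVKdef
  haveI hVKfin : FiniteDimensional K VK :=
    FiniteDimensional.span_of_finite K (Set.finite_range _)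
  set Bop : ↥M → (MonoidAlgebra K ↥M →ₗ[K] MonoidAlgebra K ↥M) := fun mm =>
    LinearMap.mulLeft K (ι f0 * MonoidAlgebra.single mm 1)
      - LinearMap.mulRight K (MonoidAlgebra.single mm 1 * ι f0) with hBopdef
  have hBop_apply : ∀ (mm : ↥M) (F : MonoidAlgebra K ↥M),
      Bop mm F = ι f0 * MonoidAlgebra.single mm 1 * F
        - F * (MonoidAlgebra.single mm 1 * ι f0) := by
    intro mm F
    rfl
  set NN : Finset ↥M → Submodule K (MonoidAlgebra K ↥M) := fun U =>
    VK ⊓ (U.inf (fun mm => LinearMap.ker (Bop mm))) with hNNdef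
  -- bands
  set Sig : Finset ↥M := Finset.univ.biUnion (fun i : Fin (k0+1+1) => (f i).coeff.support) with hSigdef
  set band : ↥M → Finset ↥M :=
    fun mm => ((Sig ×ˢ Sig).image (fun p : ↥M × ↥M => p.1 * mm * p.2)) with hbanddef
  have hf0supp : ((ι f0).coeff.support : Set ↥M) ⊆ (Sig : Set ↥M) := by
    rw [ι_supp]
    intro t ht
    exact Finset.mem_coe.mpr (Finset.mem_biUnion.mpr ⟨0, Finset.mem_univ _, ht⟩)
  have hVKsupp : ∀ F ∈ VK, ((F : MonoidAlgebra K ↥M).coeff.support : Set ↥M) ⊆ (Sig : Set ↥M) := by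
    intro F hF
    induction hF using Submodule.span_induction with
    | mem x hx =>
      obtain ⟨i, rfl⟩ := hx
      rw [ι_supp]
      intro t ht
      exact Finset.mem_coe.mpr (Finset.mem_biUnion.mpr ⟨i.succ, Finset.mem_univ _, ht⟩)
    | zero => simp
    | add x y _ _ hx hy =>
      refine Set.Subset.trans (Finset.coe_subset.mpr (Finsupp.support_add)) ?_
      rw [Finset.coe_union]
      exact Set.union_subset hx hy
    | smul a x _ hx =>
      exact Set.Subset.trans (Finset.coe_subset.mpr (Finsupp.support_smul)) hx
  have hBsupp : ∀ (mm : ↥M) (F : MonoidAlgebra K ↥M), F ∈ VK →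
      ((Bop mm F).coeff.support : Set ↥M) ⊆ (band mm : Set ↥M) := by
    intro mm F hF
    rw [hBop_apply]
    have hband : ∀ a ∈ Sig, ∀ b ∈ Sig, a * mm * b ∈ band mm := by
      intro a ha b hb
      exact Finset.mem_image.mpr ⟨(a, b), Finset.mem_product.mpr ⟨ha, hb⟩, rfl⟩
    intro t ht
    have ht' := Finsupp.support_sub (by exact ht)
    rw [Finset.mem_union] at ht'
    rcases ht' with ht' | ht'
    · -- t ∈ supp (ι f0 * m̂ * F)
      have h1 := MonoidAlgebra.support_coeff_mul_subset (ι f0 * MonoidAlgebra.single mm 1) F ht'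
      rw [Finset.mem_mul] at h1
      obtain ⟨a, ha, b, hb, rfl⟩ := h1
      have h2 := MonoidAlgebra.support_coeff_mul_subset (ι f0) (MonoidAlgebra.single mm 1) ha
      rw [Finset.mem_mul] at h2
      obtain ⟨a', ha', m', hm', rfl⟩ := h2
      have hm'' : m' = mm := by
        have := Finsupp.support_single_subset hm'
        simpa using this
      subst hm''
      exact hband a' (hf0supp ha') b (hVKsupp F hF hb)
    · have h1 := MonoidAlgebra.support_coeff_mul_subset F (MonoidAlgebra.single mm 1 * ι f0) ht'
      rw [Finset.mem_mul] at h1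
      obtain ⟨a, ha, b, hb, rfl⟩ := h1
      have h2 := MonoidAlgebra.support_coeff_mul_subset (MonoidAlgebra.single mm 1) (ι f0) hb
      rw [Finset.mem_mul] at h2
      obtain ⟨m', hm', b', hb', rfl⟩ := h2
      have hm'' : m' = mm := by
        have := Finsupp.support_single_subset hm'
        simpa using this
      have heq : a * (m' * b') = a * mm * b' := by rw [hm'', ← mul_assoc]
      rw [heq]
      exact hband a (hVKsupp F hF ha) b' (hf0supp hb')
  have hsplit : ∀ (U : Finset ↥M) (v : ↥M → MonoidAlgebra K ↥M),
      (∀ mm ∈ U, ((v mm).coeff.support : Set ↥M) ⊆ (band mm : Set ↥M)) →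
      ((U : Set ↥M).Pairwise (fun a b => Disjoint (band a) (band b))) →
      (∑ mm ∈ U, v mm) = 0 → ∀ mm ∈ U, v mm = 0 := by
    intro U v hv hU hsum mm hmm
    ext t
    simp only [MonoidAlgebra.coeff_zero, Finsupp.coe_zero, Pi.zero_apply]
    by_cases htm : t ∈ (v mm).coeff.support
    · have hterm : ∀ m' ∈ U, m' ≠ mm → (v m').coeff t = 0 := by
        intro m' hm' hne
        by_contra h0
        have ht' : t ∈ (v m').coeff.support := Finsupp.mem_support_iff.mpr h0
        have hd := hU (Finset.mem_coe.mpr hm') (Finset.mem_coe.mpr hmm) hne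
        have h1 : t ∈ band m' := Finset.mem_coe.mp (hv m' hm' ht')
        have h2 : t ∈ band mm := Finset.mem_coe.mp (hv mm hmm htm)
        exact (Finset.disjoint_left.mp hd h1) h2
      have hsv : (∑ m' ∈ U, v m').coeff t = (v mm).coeff t := by
        rw [MonoidAlgebra.coeff_sum, Finsupp.finset_sum_apply]
        exact Finset.sum_eq_single_of_mem mm hmm (fun m' hm' hne => hterm m' hm' hne)
      rw [hsum] at hsv
      simp only [MonoidAlgebra.coeff_zero, Finsupp.coe_zero, Pi.zero_apply] at hsv
      exact hsv.symm
    · exact Finsupp.notMem_support_iff.mp htm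
  have hspan_map : ∀ x ∈ Submodule.span (Pr R) (Set.range tail), ι x ∈ VK := by
    intro x hx
    induction hx using Submodule.span_induction with
    | mem y hy =>
      obtain ⟨i, rfl⟩ := hy
      exact Submodule.subset_span ⟨i, rfl⟩
    | zero => rw [map_zero]; exact Submodule.zero_mem _
    | add y z _ _ hy hz => rw [map_add]; exact Submodule.add_mem _ hy hz
    | smul a y _ hy => rw [ι_smul]; exact Submodule.smul_mem _ _ hy
  have hdisj_kill : ∀ U : Finset ↥M,
      ((U : Set ↥M).Pairwise (fun a b => Disjoint (band a) (band b))) → NN U ≠ ⊥ := by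
    intro U hU
    obtain ⟨F, hFspan, hFne, hFcomm⟩ := death (∑ mm ∈ U, MonoidAlgebra.single mm (1 : Pr R))
    have hιF : ι F ∈ VK := hspan_map F hFspan
    have hw : ι (∑ mm ∈ U, MonoidAlgebra.single mm (1 : Pr R))
        = ∑ mm ∈ U, MonoidAlgebra.single mm (1 : K) := by
      rw [map_sum]
      exact Finset.sum_congr rfl fun mm _ => by rw [ι_single, map_one]
    have hBsum : ∑ mm ∈ U, Bop mm (ι F) = 0 := by
      have hcomm' : ι f0 * (∑ mm ∈ U, MonoidAlgebra.single mm (1:K)) * ι F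
          = ι F * ((∑ mm ∈ U, MonoidAlgebra.single mm (1:K)) * ι f0) := by
        rw [← hw]
        calc ι f0 * ι (∑ mm ∈ U, MonoidAlgebra.single mm (1 : Pr R)) * ι F
            = ι (f0 * (∑ mm ∈ U, MonoidAlgebra.single mm (1 : Pr R)) * F) := by
              rw [map_mul, map_mul]
        _ = ι (F * (∑ mm ∈ U, MonoidAlgebra.single mm (1 : Pr R)) * f0) := by rw [hFcomm]
        _ = ι F * (ι (∑ mm ∈ U, MonoidAlgebra.single mm (1 : Pr R)) * ι f0) := by
              rw [map_mul, map_mul, mul_assoc]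
      calc ∑ mm ∈ U, Bop mm (ι F)
          = ∑ mm ∈ U, (ι f0 * MonoidAlgebra.single mm 1 * ι F
              - ι F * (MonoidAlgebra.single mm 1 * ι f0)) :=
            Finset.sum_congr rfl fun mm _ => hBop_apply mm (ι F)
      _ = ι f0 * (∑ mm ∈ U, MonoidAlgebra.single mm (1:K)) * ι F
            - ι F * ((∑ mm ∈ U, MonoidAlgebra.single mm (1:K)) * ι f0) := by
            rw [Finset.sum_sub_distrib]
            congr 1
            · rw [Finset.mul_sum, Finset.sum_mul]
            · rw [Finset.sum_mul, Finset.mul_sum]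
      _ = 0 := by rw [hcomm', sub_self]
    have hkillall : ∀ mm ∈ U, Bop mm (ι F) = 0 :=
      hsplit U (fun mm => Bop mm (ι F)) (fun mm _ => hBsupp mm (ι F) hιF) hU hBsum
    rw [Submodule.ne_bot_iff]
    refine ⟨ι F, ?_, fun h0 => hFne (ι_inj (by rw [h0, map_zero]))⟩
    rw [hNNdef]
    apply Submodule.mem_inf.mpr
    refine ⟨hιF, ?_⟩
    rw [Submodule.mem_finsetInf]
    intro mm hmm
    exact LinearMap.mem_ker.mpr (hkillall mm hmm)
  set GoodU : Set (Finset ↥M) :=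
    {U | (U : Set ↥M).Pairwise (fun a b => Disjoint (band a) (band b))} with hGood
  have hGoodEmpty : (∅ : Finset ↥M) ∈ GoodU := by
    rw [hGood]
    simp [Set.pairwise_empty]
  set ranks : Set ℕ := (fun U => Module.finrank K (NN U)) '' GoodU with hranks
  have hranksne : ranks.Nonempty := ⟨_, ⟨∅, hGoodEmpty, rfl⟩⟩
  obtain ⟨U₀, hU₀good, hU₀rank⟩ : ∃ U₀ ∈ GoodU, Module.finrank K (NN U₀) = sInf ranks := by
    obtain ⟨U₀, hU₀, hr⟩ := Nat.sInf_mem hranksne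
    exact ⟨U₀, hU₀, hr⟩
  have hmin : ∀ U ∈ GoodU, sInf ranks ≤ Module.finrank K (NN U) :=
    fun U hU => Nat.sInf_le ⟨U, hU, rfl⟩
  haveI hNNfin : ∀ U : Finset ↥M, FiniteDimensional K (NN U) := by
    intro U
    have : NN U ≤ VK := by rw [hNNdef]; exact inf_le_left
    exact Submodule.finiteDimensional_of_le this
  have hext : ∀ mm : ↥M, (∀ u ∈ U₀, Disjoint (band mm) (band u)) →
      NN U₀ ≤ LinearMap.ker (Bop mm) := by
    intro mm hdis
    have hgood : insert mm U₀ ∈ GoodU := by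
      rw [hGood, Set.mem_setOf_eq, Finset.coe_insert]
      apply Set.Pairwise.insert hU₀good
      intro b hb _
      exact ⟨hdis b (Finset.mem_coe.mp hb), (hdis b (Finset.mem_coe.mp hb)).symm⟩
    have hle : NN (insert mm U₀) ≤ NN U₀ := by
      rw [hNNdef]
      refine inf_le_inf_left VK ?_
      rw [Finset.inf_insert]
      exact inf_le_right
    have heq : NN (insert mm U₀) = NN U₀ := by
      apply Submodule.eq_of_le_of_finrank_le hle
      rw [hU₀rank]
      exact hmin _ hgood
    rw [← heq, hNNdef]
    refine le_trans inf_le_right ?_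
    exact Finset.inf_le (Finset.mem_insert_self mm U₀)
  have hconj_inj : ∀ (p q x y : ↥M), p * x * q = p * y * q → x = y := by
    intro p q x y hxy
    apply hφ
    have hφeq := congrArg φ hxy
    simp only [map_mul] at hφeq
    exact mul_left_cancel (mul_right_cancel hφeq)
  set Ex : Set ↥M := {mm | ∃ u ∈ U₀, ¬ Disjoint (band mm) (band u)} with hExdef
  have hExfin : Ex.Finite := by
    have hsub : Ex ⊆ ⋃ u ∈ (U₀ : Set ↥M),
        ⋃ p ∈ ((Sig ×ˢ Sig : Finset (↥M × ↥M)) : Set (↥M × ↥M)),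
        ⋃ t ∈ (band u : Set ↥M), {mm | p.1 * mm * p.2 = t} := by
      intro mm hmm
      obtain ⟨u, hu, hnd⟩ := hmm
      rw [Finset.not_disjoint_iff] at hnd
      obtain ⟨t, htm, htu⟩ := hnd
      obtain ⟨p, hp, hpt⟩ := Finset.mem_image.mp htm
      refine Set.mem_biUnion (Finset.mem_coe.mpr hu) ?_
      refine Set.mem_biUnion (Finset.mem_coe.mpr hp) ?_
      refine Set.mem_biUnion (Finset.mem_coe.mpr htu) ?_
      exact hpt
    refine Set.Finite.subset ?_ hsub
    refine Set.Finite.biUnion U₀.finite_toSet ?_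
    intro u _
    refine Set.Finite.biUnion (Sig ×ˢ Sig).finite_toSet ?_
    intro p _
    refine Set.Finite.biUnion (band u).finite_toSet ?_
    intro t _
    apply Set.Subsingleton.finite
    intro x hx y hy
    exact hconj_inj p.1 p.2 x y (hx.trans hy.symm)
  have hU₀ne := hdisj_kill U₀ hU₀good
  obtain ⟨Fstar, hFstar_mem, hFstar_ne⟩ := (Submodule.ne_bot_iff _).mp hU₀ne
  have hFstar_VK : Fstar ∈ VK := by
    have h' := hFstar_mem
    rw [hNNdef] at h'
    exact (Submodule.mem_inf.mp h').1
  rw [hVKdef] at hFstar_VK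
  obtain ⟨νf, hνf⟩ := (Submodule.mem_span_range_iff_exists_fun K).mp hFstar_VK
  obtain ⟨d, hd⟩ := IsLocalization.exist_integer_multiples
    (nonZeroDivisors (Pr R)) Finset.univ νf
  have hint : ∀ i : Fin (k0+1), ∃ a : Pr R, algebraMap (Pr R) K a = d • νf i :=
    fun i => hd i (Finset.mem_univ i)
  choose μ' hμ' using hint
  set F' : MonoidAlgebra (Pr R) ↥M := ∑ i, μ' i • tail i with hF'def
  have hF'span : ι F' = (algebraMap (Pr R) K) (d : Pr R) • Fstar := by
    rw [hF'def, map_sum]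
    have hterm : ∀ i, ι (μ' i • tail i)
        = (algebraMap (Pr R) K) (d : Pr R) • (νf i • ι (tail i)) := by
      intro i
      rw [ι_smul, hμ' i, Submonoid.smul_def, algebra_compatible_smul K (d : Pr R) (νf i),
        smul_eq_mul, mul_smul]
    rw [Finset.sum_congr rfl (fun i _ => hterm i), ← Finset.smul_sum, hνf]
  have hd0 : (algebraMap (Pr R) K) (d : Pr R) ≠ 0 :=
    IsFractionRing.to_map_ne_zero_of_mem_nonZeroDivisors d.2
  have hF'ne : F' ≠ 0 := by
    intro h0
    apply hFstar_ne
    have hz : ι F' = 0 := by rw [h0, map_zero]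
    rw [hF'span] at hz
    exact (smul_eq_zero.mp hz).resolve_left hd0
  have hkill : ∀ mm : ↥M, mm ∉ Ex →
      f0 * MonoidAlgebra.single mm 1 * F' = F' * MonoidAlgebra.single mm 1 * f0 := by
    intro mm hmm
    have hdisj : ∀ u ∈ U₀, Disjoint (band mm) (band u) := by
      intro u hu
      by_contra hc
      exact hmm ⟨u, hu, hc⟩
    have hker : Bop mm Fstar = 0 := hext mm hdisj hFstar_mem
    rw [hBop_apply] at hker
    have hcent := sub_eq_zero.mp hker
    apply ι_inj
    have hιsing : ι (MonoidAlgebra.single mm (1 : Pr R)) = MonoidAlgebra.single mm (1 : K) := by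
      rw [ι_single, map_one]
    rw [map_mul, map_mul, map_mul, map_mul, hιsing, hF'span]
    rw [mul_smul_comm, smul_mul_assoc, smul_mul_assoc]
    congr 1
    rw [hcent, mul_assoc]
  have hml := ml_cofinite hL hR Ex
    (fun u v huv => mlem φ hφ h5 Ex hExfin u v huv) hf0ne hF'ne hkill
  set b0 : Pr R := F'.coeff (lmon F' hF'ne) with hb0
  set a0 : Pr R := f0.coeff (lmon f0 hf0ne) with ha0
  have hb0ne : b0 ≠ 0 := lmon_coeff_ne F' hF'ne
  have hγ : ∑ i : Fin (k0+1+1),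
      (Fin.cases b0 (fun j => -(a0 * μ' j)) i : Pr R) • f i = 0 := by
    rw [Fin.sum_univ_succ]
    simp only [Fin.cases_zero, Fin.cases_succ]
    have hneg : ∑ j : Fin (k0+1), (-(a0 * μ' j)) • f j.succ = -(a0 • F') := by
      rw [hF'def, Finset.smul_sum, ← Finset.sum_neg_distrib]
      apply Finset.sum_congr rfl
      intro j _
      rw [neg_smul, smul_smul]
    rw [hneg]
    rw [show b0 • f 0 = a0 • F' from hml]
    rw [add_neg_cancel]
  have hzero := Fintype.linearIndependent_iff.mp hf _ hγ 0
  simp only [Fin.cases_zero] at hzero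
  exact hb0ne hzero

end Key

section Assemble

theorem thm_injective_Th (R : Type*) [Ring R] (M : Submonoid Rˣ)
    (h1 : ∀ (n : ℕ) (s : Fin n → R) (c : Fin n → (⊥ : Subring R)),
      (∀ i, s i ∈ Units.val '' (M : Set Rˣ)) → Function.Injective s →
      (∑ i, s i * (c i : R)) = 0 → ∀ i, c i = 0) :
    Function.Injective (Th R M) := by
  have hker : ∀ x, Th R M x = 0 → x = 0 := by
    intro x hx
    have hcoeff : ∀ t ∈ x.coeff.support, iP R (x.coeff t) = 0 := by
      set n' := x.coeff.support.card with hn'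
      set e := x.coeff.support.equivFin with he
      set s' : Fin n' → R := fun j => nu R M (e.symm j).1 with hs'
      have hs'inj : Function.Injective s' := by
        intro a b hab
        exact e.symm.injective (Subtype.ext (nu_injective R M hab))
      set c' : Fin n' → (⊥ : Subring R) :=
        fun j => ⟨iP R (x.coeff (e.symm j).1), iP_mem_bot R _⟩ with hc'
      have hsum' : ∑ j, s' j * (c' j : R) = 0 := by
        rw [← hx, Th_apply]
        rw [← Finset.sum_coe_sort x.coeff.support (fun t => iP R (x.coeff t) * nu R M t)]
        rw [← Equiv.sum_comp e.symm (fun t => iP R (x.coeff t.1) * nu R M t.1)]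
        exact Finset.sum_congr rfl fun j _ => ((iP_comm R _ _).eq).symm
      intro t ht
      have hz := h1 n' s' c' (fun j => nu_mem R M _) hs'inj hsum' (e ⟨t, ht⟩)
      have hz' : iP R (x.coeff ((e.symm (e ⟨t, ht⟩)).1)) = 0 := by
        exact congrArg Subtype.val hz
      rwa [Equiv.symm_apply_apply] at hz'
    ext t
    simp only [MonoidAlgebra.coeff_zero, Finsupp.coe_zero, Pi.zero_apply]
    by_cases ht : t ∈ x.coeff.support
    · exact iP_injective R (by rw [hcoeff t ht, map_zero])
    · exact Finsupp.notMem_support_iff.mp ht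
  intro a b hab
  have : Th R M (a - b) = 0 := by rw [map_sub, hab, sub_self]
  exact sub_eq_zero.mp (hker _ this)

end Assemble

end S0

/-- Distinct elements of `S ⊆ R` are linearly independent over the subring `C` of `R`:
whenever `s₁, …, sₙ ∈ S` are pairwise distinct, `c₁, …, cₙ ∈ C` and
`s₁c₁ + ⋯ + sₙcₙ = 0`, then `c₁ = ⋯ = cₙ = 0`. -/
def LinIndepOver (R : Type*) [Ring R] (C : Subring R) (S : Set R) : Prop :=
  ∀ (n : ℕ) (s : Fin n → R) (c : Fin n → C), (∀ i, s i ∈ S) → Function.Injective s →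
    (∑ i, s i * (c i : R)) = 0 → ∀ i, c i = 0

/-- Let `R` be a ring with prime subring `P = ⊥` (the subring generated
by `1`), `M` a submonoid of the group of units of `R` and `C` a subring of `R`. Assume:
(1) distinct elements of `M` are linearly independent over `P`;
(2) for `c ∈ C` and `f` in the subring generated by `P` and `M`, `c * f = 0` implies
    `c = 0` or `f = 0`;
(3) every element of `M` commutes with every element of `C`;
(4) `M` is an orderable monoid;
(5) there are a group `H` and an injective monoid homomorphism `M → H` such that the
    subgroup of `H` generated by the image of `M` has trivial center.
Then distinct elements of `M` are linearly independent over `C`. -/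
theorem linIndepOver_of_linIndepOver_prime (R : Type*) [Ring R]
    (M : Submonoid Rˣ) (C : Subring R)
    (h1 : LinIndepOver R (⊥ : Subring R) (Units.val '' (M : Set Rˣ)))
    (h2 : ∀ c ∈ C, ∀ f ∈ Subring.closure (Units.val '' (M : Set Rˣ)),
      c * f = 0 → c = 0 ∨ f = 0)
    (h3 : ∀ c ∈ C, ∀ u : Rˣ, u ∈ M → c * (u : R) = (u : R) * c)
    (h4 : ∃ lt : ↥M → ↥M → Prop, IsStrictTotalOrder ↥M lt ∧
      ∀ x y z : ↥M, lt x y → lt (z * x) (z * y) ∧ lt (x * z) (y * z))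
    (H : Type*) [Group H] (φ : ↥M →* H) (hφ : Function.Injective φ)
    (h5 : Subgroup.center ↥(Subgroup.closure (Set.range φ)) = ⊥) :
    LinIndepOver R C (Units.val '' (M : Set Rˣ)) := by
  intro n s c hmem hinj hsum
  by_cases hnt : (0 : R) = 1
  · haveI : Subsingleton R := subsingleton_of_zero_eq_one hnt
    intro i
    exact Subtype.ext (Subsingleton.elim _ _)
  haveI : Nontrivial R := nontrivial_of_ne 0 1 hnt
  have hmem' : ∀ i, ∃ m : ↥M, S0.nu R M m = s i := by
    intro i
    obtain ⟨x, hxM, hxv⟩ := hmem i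
    exact ⟨⟨x, hxM⟩, hxv⟩
  choose m hm using hmem'
  have minj : Function.Injective m := by
    intro a b hab
    apply hinj
    rw [← hm a, ← hm b, hab]
  by_cases hMt : ∀ x : ↥M, x = 1
  · intro i
    have hs1 : ∀ j, s j = 1 := by
      intro j
      rw [← hm j, hMt (m j)]
      exact map_one _
    match n, s, c, hinj, hsum, hs1, i with
    | 0, s, c, hinj, hsum, hs1, i => exact i.elim0
    | 1, s, c, hinj, hsum, hs1, i =>
      rw [Fin.sum_univ_one, hs1 0, one_mul] at hsum
      rw [Subsingleton.elim i 0]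
      exact Subtype.ext hsum
    | (n+2), s, c, hinj, hsum, hs1, i =>
      exfalso
      have h01 : (0 : Fin (n+2)) = 1 := hinj (by rw [hs1 0, hs1 1])
      have := congrArg Fin.val h01
      simp at this
  push_neg at hMt
  obtain ⟨m₀, hm₀⟩ := hMt
  obtain ⟨lt, hSTO, hcomp⟩ := h4
  haveI := hSTO
  letI : DecidableRel lt := Classical.decRel lt
  letI : LinearOrder ↥M := linearOrderOfSTO lt
  have hL : ∀ ⦃a b : ↥M⦄ (cc : ↥M), a < b → cc*a < cc*b :=
    fun a b cc h => (hcomp a b cc h).1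
  have hR : ∀ ⦃a b : ↥M⦄ (cc : ↥M), a < b → a*cc < b*cc :=
    fun a b cc h => (hcomp a b cc h).2
  haveI : Infinite ↥M := by
    rcases lt_trichotomy m₀ 1 with h | h | h
    · refine Infinite.of_injective (fun k : ℕ => m₀ ^ k)
        (StrictAnti.injective (strictAnti_nat_of_succ_lt (fun kk => ?_)))
      rw [pow_succ]
      calc m₀^kk * m₀ < m₀^kk * 1 := hL _ h
      _ = m₀ ^ kk := mul_one _
    · exact absurd h hm₀
    · refine Infinite.of_injective (fun k : ℕ => m₀ ^ k)
        (StrictMono.injective (strictMono_nat_of_lt_succ (fun kk => ?_)))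
      rw [pow_succ]
      calc m₀^kk = m₀^kk * 1 := (mul_one _).symm
      _ < m₀^kk * m₀ := hL _ h
  have hΘinj : Function.Injective (S0.Th R M) := S0.thm_injective_Th R M h1
  have hsing : LinearIndependent (S0.Pr R)
      (fun i => (MonoidAlgebra.single (m i) 1 : MonoidAlgebra (S0.Pr R) ↥M)) := by
    rw [Fintype.linearIndependent_iff]
    intro g hg i
    have happ : (∑ j, g j • (MonoidAlgebra.single (m j) 1 : MonoidAlgebra (S0.Pr R) ↥M)).coeff (m i)
        = g i := by
      rw [MonoidAlgebra.coeff_sum, Finsupp.finset_sum_apply]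
      rw [Finset.sum_eq_single_of_mem i (Finset.mem_univ i)]
      · rw [MonoidAlgebra.coeff_smul_apply, MonoidAlgebra.coeff_single, Finsupp.single_apply, if_pos rfl, smul_eq_mul, mul_one]
      · intro j _ hj
        rw [MonoidAlgebra.coeff_smul_apply, MonoidAlgebra.coeff_single, Finsupp.single_apply, if_neg (fun hc => hj (minj hc)),
          smul_zero]
    rw [hg] at happ
    exact happ.symm
  have hrel : ∑ i, S0.Th R M (MonoidAlgebra.single (m i) 1) * ((c i : R)) = 0 := by
    calc ∑ i, S0.Th R M (MonoidAlgebra.single (m i) 1) * ((c i : R))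
        = ∑ i, s i * (c i : R) := by
          apply Finset.sum_congr rfl
          intro i _
          rw [S0.Th_single_one, hm]
    _ = 0 := hsum
  exact S0.key R M C h2 h3 hL hR H φ hφ h5 hΘinj n _ hsing c hrel
end

section
/- A group G contains a free monoid on two generators if and only if there exist a nonempty subset A ⊆ G and elements a, b ∈ G such that aA ∪ bA ⊆ A and aA ∩ bA = ∅. Moreover, in this case the elements a and b themselves generate a free monoid of rank 2. -/
open Pointwise

/-- Elements `a, b` of a monoid `G` generate a free monoid of rank 2 if the monoid
homomorphism from the free monoid on two generators to `G` sending the generators to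
`a` and `b` is injective. -/
def GeneratesFreeMonoid2 {G : Type*} [Monoid G] (a b : G) : Prop :=
  Function.Injective
    (FreeMonoid.lift (fun i : Fin 2 => if i = 0 then a else b) : FreeMonoid (Fin 2) →* G)

/-- A group `G` contains a free monoid on two generators if and only if
there exist a nonempty subset `A ⊆ G` and elements `a, b ∈ G` such that
`aA ∪ bA ⊆ A` and `aA ∩ bA = ∅`. Moreover, in this case `a` and `b` themselves generate
a free monoid of rank 2. -/
theorem free_monoid_iff_pingpong (G : Type*) [Group G] :
    ((∃ a b : G, GeneratesFreeMonoid2 a b) ↔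
      ∃ (A : Set G) (a b : G), A.Nonempty ∧ a • A ∪ b • A ⊆ A ∧ a • A ∩ b • A = ∅) ∧
    (∀ (A : Set G) (a b : G), A.Nonempty → a • A ∪ b • A ⊆ A → a • A ∩ b • A = ∅ →
      GeneratesFreeMonoid2 a b) := by
  have main : ∀ (A : Set G) (a b : G), A.Nonempty → a • A ∪ b • A ⊆ A → a • A ∩ b • A = ∅ →
      GeneratesFreeMonoid2 a b := by
    rintro A a b ⟨x₀, hx₀⟩ hsub hdisj
    set g : Fin 2 → G := fun i => if i = 0 then a else b with hg
    set φ : List (Fin 2) → G := fun l => (l.map g).prod with hφ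
    have hsubA : ∀ c : Fin 2, g c • A ⊆ A := by
      intro c
      fin_cases c
      · exact fun x hx => hsub (Or.inl hx)
      · exact fun x hx => hsub (Or.inr hx)
    have hdisj' : ∀ c d : Fin 2, c ≠ d → ∀ x, x ∈ g c • A → x ∈ g d • A → False := by
      intro c d hcd x hc hd
      have hx : x ∈ a • A ∩ b • A := by
        fin_cases c <;> fin_cases d <;>
          first
          | exact absurd rfl hcd
          | exact ⟨hc, hd⟩
          | exact ⟨hd, hc⟩
      rw [hdisj] at hx
      exact hx
    have L1 : ∀ l : List (Fin 2), ∀ x ∈ A, φ l • x ∈ A := by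
      intro l
      induction l with
      | nil => intro x hx; simpa [hφ] using hx
      | cons c t ih =>
          intro x hx
          have : φ (c :: t) • x = g c • (φ t • x) := by
            simp [hφ, mul_smul, mul_assoc]
          rw [this]
          exact hsubA c (Set.smul_mem_smul_set (ih x hx))
    -- empty vs cons contradiction
    have Lkey : ∀ (c : Fin 2) (t : List (Fin 2)), (1 : G) = φ (c :: t) → False := by
      intro c t h
      have hA : A ⊆ g c • A := by
        intro x hx
        refine ⟨φ t • x, L1 t x hx, ?_⟩
        show g c • (φ t • x) = x
        rw [← mul_smul]
        have : g c * φ t = φ (c :: t) := by simp [hφ]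
        rw [this, ← h, one_smul]
      obtain ⟨d, hd⟩ : ∃ d : Fin 2, d ≠ c := by
        fin_cases c
        · exact ⟨1, by decide⟩
        · exact ⟨0, by decide⟩
      have h1 : g d • x₀ ∈ g d • A := Set.smul_mem_smul_set hx₀
      have h2 : g d • x₀ ∈ g c • A := hA (hsubA d h1)
      exact hdisj' c d hd.symm _ h2 h1
    have inj : ∀ l₁ l₂ : List (Fin 2), φ l₁ = φ l₂ → l₁ = l₂ := by
      intro l₁
      induction l₁ with
      | nil =>
          intro l₂ h
          cases l₂ with
          | nil => rfl
          | cons c t => exact (Lkey c t (by simpa [hφ] using h)).elim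
      | cons c₁ t₁ ih =>
          intro l₂ h
          cases l₂ with
          | nil => exact (Lkey c₁ t₁ (by simpa [hφ] using h.symm)).elim
          | cons c₂ t₂ =>
              by_cases hc : c₁ = c₂
              · subst hc
                have : g c₁ * φ t₁ = g c₁ * φ t₂ := by simpa [hφ] using h
                have := mul_left_cancel this
                rw [ih t₂ this]
              · exfalso
                have h1 : φ (c₁ :: t₁) • x₀ ∈ g c₁ • A := by
                  have : φ (c₁ :: t₁) • x₀ = g c₁ • (φ t₁ • x₀) := by simp [hφ, mul_smul, mul_assoc]
                  rw [this]; exact Set.smul_mem_smul_set (L1 t₁ x₀ hx₀)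
                have h2 : φ (c₁ :: t₁) • x₀ ∈ g c₂ • A := by
                  rw [h]
                  have : φ (c₂ :: t₂) • x₀ = g c₂ • (φ t₂ • x₀) := by simp [hφ, mul_smul, mul_assoc]
                  rw [this]; exact Set.smul_mem_smul_set (L1 t₂ x₀ hx₀)
                exact hdisj' c₁ c₂ hc _ h1 h2
    intro w₁ w₂ h
    have h' : φ w₁.toList = φ w₂.toList := by
      simpa [hφ, FreeMonoid.lift_apply] using h
    exact FreeMonoid.toList.injective (inj _ _ h')
  refine ⟨⟨?_, fun ⟨A, a, b, hne, hsub, hdisj⟩ => ⟨a, b, main A a b hne hsub hdisj⟩⟩, main⟩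
  rintro ⟨a, b, hf⟩
  set g : Fin 2 → G := fun i => if i = 0 then a else b with hg
  set F : FreeMonoid (Fin 2) →* G := FreeMonoid.lift g with hF
  have hFa : F (FreeMonoid.of 0) = a := by simp [hF, hg]
  have hFb : F (FreeMonoid.of 1) = b := by simp [hF, hg]
  refine ⟨Set.range F, a, b, ⟨1, 1, map_one F⟩, ?_, ?_⟩
  · rintro x (⟨y, ⟨w, rfl⟩, rfl⟩ | ⟨y, ⟨w, rfl⟩, rfl⟩)
    · exact ⟨FreeMonoid.of 0 * w, by rw [map_mul, hFa]; rfl⟩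
    · exact ⟨FreeMonoid.of 1 * w, by rw [map_mul, hFb]; rfl⟩
  · ext x
    simp only [Set.mem_inter_iff, Set.mem_empty_iff_false, iff_false]
    rintro ⟨⟨y, ⟨w, rfl⟩, rfl⟩, ⟨z, ⟨w', hw'⟩, hz⟩⟩
    have : F (FreeMonoid.of 0 * w) = F (FreeMonoid.of 1 * w') := by
      rw [map_mul, map_mul, hFa, hFb, hw']
      exact hz.symm
    have := congrArg FreeMonoid.toList (hf this)
    simp [FreeMonoid.toList_of_mul] at this
end

section
/- Let G be a group, let H be a subgroup of G, and let x ∈ G be such that xHx⁻¹ = H. Suppose there exist an injective group homomorphism f from H to the additive group of the real numbers (ℝ, +) and a real number r with r ≥ 2 or 0 < r ≤ 1/2, such that f(xhx⁻¹) = r·f(h) for all h ∈ H. Then for every t ∈ H with t ≠ 1, the elements tx and x generate a free monoid of rank 2 in G. (In particular, if H is a nontrivial additive subgroup of ℝ, C = ⟨x⟩ is infinite cyclic, and G = H ⋊ C is the semidirect product in which x acts on H by multiplication by such an r, then for every t ∈ H∖{0} the elements tx and x generate a noncommutative free submonoid of G.) -/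
def Sval (r : ℝ) : List (Fin 2) → ℝ
  | [] => 0
  | c :: w => (if c = 0 then 1 else 0) + r * Sval r w

lemma sval_nonneg {r : ℝ} (hr : 0 ≤ r) : ∀ w, 0 ≤ Sval r w
  | [] => le_refl 0
  | c :: w => by
    have := sval_nonneg hr w
    simp only [Sval]
    split_ifs <;> nlinarith

lemma sval_lt {r : ℝ} (h0 : 0 < r) (h1 : r < 1) : ∀ w, Sval r w < 1 / (1 - r)
  | [] => by
    have h1' : 0 < 1 - r := by linarith
    simp only [Sval]
    positivity
  | c :: w => by
    have ih := sval_lt h0 h1 w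
    have h1' : 0 < 1 - r := by linarith
    have key : 1 + r * (1 / (1 - r)) = 1 / (1 - r) := by field_simp; ring
    simp only [Sval]
    split_ifs <;> nlinarith [sval_nonneg h0.le w]

lemma sval_inj_big {r : ℝ} (hr : 2 ≤ r) : ∀ w₁ w₂ : List (Fin 2),
    w₁.length = w₂.length → w₁ ≠ w₂ → 1 ≤ |Sval r w₁ - Sval r w₂|
  | [], [], _, hne => absurd rfl hne
  | [], _ :: _, hl, _ => by simp at hl
  | _ :: _, [], hl, _ => by simp at hl
  | c₁ :: w₁, c₂ :: w₂, hl, hne => by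
    have hl' : w₁.length = w₂.length := by simpa using hl
    set δ := Sval r w₁ - Sval r w₂ with hδdef
    have hδ : w₁ = w₂ ∨ 2 ≤ |r * δ| := by
      by_cases hw : w₁ = w₂
      · exact Or.inl hw
      · refine Or.inr ?_
        have ih := sval_inj_big hr w₁ w₂ hl' hw
        rw [abs_mul, abs_of_nonneg (by linarith : (0:ℝ) ≤ r)]
        nlinarith [abs_nonneg δ]
    have hexp : Sval r (c₁ :: w₁) - Sval r (c₂ :: w₂) =
        ((if c₁ = 0 then (1:ℝ) else 0) - (if c₂ = 0 then (1:ℝ) else 0)) + r * δ := by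
      simp only [Sval, hδdef]; ring
    rw [hexp]
    by_cases hc : c₁ = c₂
    · rcases hδ with hw | hbig
      · exact absurd (by rw [hc, hw]) hne
      · have hE : (if c₁ = 0 then (1:ℝ) else 0) - (if c₂ = 0 then (1:ℝ) else 0) = 0 := by
          rw [hc]; ring
        rw [hE, zero_add]
        linarith
    · have hE : (if c₁ = 0 then (1:ℝ) else 0) - (if c₂ = 0 then (1:ℝ) else 0) = 1 ∨
          (if c₁ = 0 then (1:ℝ) else 0) - (if c₂ = 0 then (1:ℝ) else 0) = -1 := by
        fin_cases c₁ <;> fin_cases c₂ <;> simp_all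
      set E := (if c₁ = 0 then (1:ℝ) else 0) - (if c₂ = 0 then (1:ℝ) else 0) with hEdef
      have hE1 : |E| = 1 := by rcases hE with h | h <;> rw [h] <;> simp
      rcases hδ with hw | hbig
      · have : δ = 0 := by rw [hδdef, hw]; ring
        rw [this, mul_zero, add_zero, hE1]
      · have h1 : |r * δ| - |(-E)| ≤ |r * δ - (-E)| := abs_sub_abs_le_abs_sub _ _
        have h2 : r * δ - (-E) = E + r * δ := by ring
        rw [h2, abs_neg, hE1] at h1
        linarith

lemma sval_inj_small {r : ℝ} (h0 : 0 < r) (h1 : r ≤ 1 / 2) : ∀ w₁ w₂ : List (Fin 2),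
    w₁.length = w₂.length → Sval r w₁ = Sval r w₂ → w₁ = w₂
  | [], [], _, _ => rfl
  | [], _ :: _, hl, _ => by simp at hl
  | _ :: _, [], hl, _ => by simp at hl
  | c₁ :: w₁, c₂ :: w₂, hl, hs => by
    have hl' : w₁.length = w₂.length := by simpa using hl
    have hr1 : r < 1 := by linarith
    have hb₁ := sval_lt h0 hr1 w₁
    have hb₂ := sval_lt h0 hr1 w₂
    have hn₁ := sval_nonneg h0.le w₁
    have hn₂ := sval_nonneg h0.le w₂
    have h1r : 0 < 1 - r := by linarith
    have hbound : |r * (Sval r w₁ - Sval r w₂)| < 1 := by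
      rw [abs_mul, abs_of_pos h0]
      have : |Sval r w₁ - Sval r w₂| < 1 / (1 - r) := abs_sub_lt_of_nonneg_of_lt hn₁ hb₁ hn₂ hb₂
      calc r * |Sval r w₁ - Sval r w₂| < r * (1 / (1 - r)) := by
            exact mul_lt_mul_of_pos_left this h0
        _ ≤ 1 := by rw [mul_one_div, div_le_one h1r]; linarith
    have hcc : c₁ = c₂ := by
      by_contra hc
      have hE : (if c₁ = 0 then (1:ℝ) else 0) - (if c₂ = 0 then (1:ℝ) else 0) = 1 ∨
          (if c₁ = 0 then (1:ℝ) else 0) - (if c₂ = 0 then (1:ℝ) else 0) = -1 := by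
        fin_cases c₁ <;> fin_cases c₂ <;> simp_all
      have hexp : (0:ℝ) = ((if c₁ = 0 then (1:ℝ) else 0) - (if c₂ = 0 then (1:ℝ) else 0)) +
          r * (Sval r w₁ - Sval r w₂) := by
        have := hs; simp only [Sval] at this; linarith [this]
      rcases abs_cases (r * (Sval r w₁ - Sval r w₂)) with ⟨ha, _⟩ | ⟨ha, _⟩ <;>
        rcases hE with h | h <;> rw [h] at hexp <;> linarith
    have hss : Sval r w₁ = Sval r w₂ := by
      have := hs; simp only [Sval, hcc] at this
      have := mul_left_cancel₀ (ne_of_gt h0) (by linarith : r * Sval r w₁ = r * Sval r w₂)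
      exact this
    rw [hcc, sval_inj_small h0 h1 w₁ w₂ hl' hss]

lemma sval_inj {r : ℝ} (hr : 2 ≤ r ∨ (0 < r ∧ r ≤ 1 / 2)) (w₁ w₂ : List (Fin 2))
    (hl : w₁.length = w₂.length) (hs : Sval r w₁ = Sval r w₂) : w₁ = w₂ := by
  rcases hr with h2 | ⟨hpos, hhalf⟩
  · by_contra hne
    have := sval_inj_big h2 w₁ w₂ hl hne
    rw [hs] at this
    simp at this
    linarith
  · exact sval_inj_small hpos hhalf w₁ w₂ hl hs

/-- Let `G` be a group, `H ≤ G` a subgroup and `x ∈ G` with `xHx⁻¹ = H`.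
Suppose there is an injective group homomorphism `f : H → (ℝ, +)` and a real number `r`
with `r ≥ 2` or `0 < r ≤ 1/2` such that `f(xhx⁻¹) = r·f(h)` for all `h ∈ H`. Then for every
`t ∈ H` with `t ≠ 1`, the elements `t·x` and `x` generate a free monoid of rank 2 in `G`. -/
theorem free_monoid_from_scaling_action (G : Type*) [Group G] (H : Subgroup G) (x : G)
    (hxH : ∀ g : G, g ∈ H ↔ x * g * x⁻¹ ∈ H)
    (f : ↥H → ℝ)
    (hf_add : ∀ h₁ h₂ : ↥H, f (h₁ * h₂) = f h₁ + f h₂)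
    (hf_inj : Function.Injective f)
    (r : ℝ) (hr : 2 ≤ r ∨ (0 < r ∧ r ≤ 1 / 2))
    (hf_conj : ∀ h : ↥H, f ⟨x * (h : G) * x⁻¹, (hxH (h : G)).mp h.2⟩ = r * f h) :
    ∀ t : ↥H, (t : G) ≠ 1 → GeneratesFreeMonoid2 ((t : G) * x) x := by
  unfold GeneratesFreeMonoid2
  intro t ht
  have hf1 : f 1 = 0 := by have := hf_add 1 1; simpa using this
  have hfeq1 : ∀ h : ↥H, f h = 0 → h = 1 := fun h hh => hf_inj (by rw [hh, hf1])
  have hft : f t ≠ 0 := by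
    intro h0
    exact ht (by rw [hfeq1 t h0]; rfl)
  have hr0 : 0 < r := by rcases hr with h | ⟨h, _⟩; · linarith
                         · exact h
  have hrne1 : r ≠ 1 := by rcases hr with h | ⟨_, h⟩ <;> intro e <;> rw [e] at h <;> linarith
  set g : Fin 2 → G := fun i => if i = 0 then (t:G) * x else x with hg
  have conj_mem : ∀ h : ↥H, x * (h:G) * x⁻¹ ∈ H := fun h => (hxH _).mp h.2
  -- key structural lemma
  have key : ∀ l : List (Fin 2), ∃ h : ↥H,
      (l.map g).prod = (h:G) * x ^ l.length ∧ f h = f t * Sval r l := by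
    intro l
    induction l with
    | nil => exact ⟨1, by simp, by simp [hf1, Sval]⟩
    | cons c l ih =>
      obtain ⟨h, hp, hv⟩ := ih
      by_cases hc : c = 0
      · refine ⟨t * ⟨x * (h:G) * x⁻¹, conj_mem h⟩, ?_, ?_⟩
        · rw [List.map_cons, List.prod_cons, hp]
          simp only [List.map_cons, List.prod_cons, hp, List.length_cons, hg,
            if_pos hc, Subgroup.coe_mul]
          group
        · rw [hf_add, hf_conj h, hv]
          simp only [Sval, if_pos hc]
          ring
      · refine ⟨⟨x * (h:G) * x⁻¹, conj_mem h⟩, ?_, ?_⟩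
        · rw [List.map_cons, List.prod_cons, hp]
          simp only [List.map_cons, List.prod_cons, hp, List.length_cons, hg,
            if_neg hc]
          group
        · rw [hf_conj h, hv]
          simp only [Sval, if_neg hc]
          ring
  -- iterated conjugation
  have iter : ∀ (p : ℕ) (h : ↥H), ∃ h' : ↥H,
      (h':G) = x ^ p * (h:G) * (x ^ p)⁻¹ ∧ f h' = r ^ p * f h := by
    intro p
    induction p with
    | zero => intro h; exact ⟨h, by simp, by simp⟩
    | succ p ih =>
      intro h
      obtain ⟨h', hc, hv⟩ := ih h
      refine ⟨⟨x * (h':G) * x⁻¹, conj_mem h'⟩, ?_, ?_⟩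
      · show x * (h':G) * x⁻¹ = _
        rw [hc]
        group
      · rw [hf_conj h', hv, pow_succ]
        ring
  -- no collisions between different lengths
  have main : ∀ (a b : ↥H) (i j : ℕ), i < j → (a:G) * x ^ i = (b:G) * x ^ j → False := by
    intro a b i j hij heq
    have h1 : (↑b)⁻¹ * ↑a * x ^ i = x ^ j := by
      rw [mul_assoc, heq, ← mul_assoc, inv_mul_cancel, one_mul]
    have h2 : x ^ j = x ^ (j - i) * x ^ i := by rw [← pow_add]; congr 1; omega
    have hba : ((b⁻¹ * a : ↥H) : G) = x ^ (j - i) := by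
      simp only [Subgroup.coe_mul, Subgroup.coe_subtype, InvMemClass.coe_inv]
      exact mul_right_cancel (h1.trans h2)
    set u : ↥H := b⁻¹ * a with hu
    have hq0 : j - i ≠ 0 := by omega
    have hconj : x * (u:G) * x⁻¹ = (u:G) := by
      rw [hba]
      group
    have hfu : f u = r * f u := by
      have h := hf_conj u
      rwa [show (⟨x * (u:G) * x⁻¹, conj_mem u⟩ : ↥H) = u from Subtype.ext hconj] at h
    have hu0 : f u = 0 := by
      have h : (r - 1) * f u = 0 := by linarith
      rcases mul_eq_zero.mp h with h' | h'
      · exact absurd (by linarith : r = 1) hrne1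
      · exact h'
    have hxq : x ^ (j - i) = 1 := by
      rw [← hba, hfeq1 u hu0]; rfl
    obtain ⟨h', hc, hv⟩ := iter (j - i) t
    have hht : h' = t := Subtype.ext (by rw [hc, hxq]; simp)
    rw [hht] at hv
    have hrp : r ^ (j - i) = 1 := by
      have h : (r ^ (j - i) - 1) * f t = 0 := by linarith
      rcases mul_eq_zero.mp h with h' | h'
      · linarith
      · exact absurd h' hft
    rcases hr with h2 | ⟨hpos, hhalf⟩
    · have : 1 < r ^ (j - i) := one_lt_pow₀ (by linarith) hq0
      linarith
    · have : r ^ (j - i) < 1 := pow_lt_one₀ hpos.le (by linarith) hq0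
      linarith
  -- injectivity
  intro w₁ w₂ hw
  rw [FreeMonoid.lift_apply, FreeMonoid.lift_apply] at hw
  obtain ⟨h₁, hp₁, hv₁⟩ := key w₁.toList
  obtain ⟨h₂, hp₂, hv₂⟩ := key w₂.toList
  rw [hp₁, hp₂] at hw
  have hmn : w₁.toList.length = w₂.toList.length := by
    rcases Nat.lt_trichotomy w₁.toList.length w₂.toList.length with h | h | h
    · exact absurd (main h₁ h₂ _ _ h hw) not_false
    · exact h
    · exact absurd (main h₂ h₁ _ _ h hw.symm) not_false
  rw [hmn] at hw
  have hh : h₁ = h₂ := Subtype.ext (mul_right_cancel hw)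
  have hs : Sval r w₁.toList = Sval r w₂.toList := by
    apply mul_left_cancel₀ hft
    rw [← hv₁, ← hv₂, hh]
  have hl : w₁.toList = w₂.toList := sval_inj hr _ _ hmn hs
  exact FreeMonoid.toList.injective hl
end

section
/- Let (G,<) be an ordered group possessing a convex subgroup C which is not normal in G. Then G contains a noncommutative free monoid; more precisely, there exist elements a, b ∈ G with 1 < a and 1 < b such that a and b generate a free monoid of rank 2 in G. -/
/-- A subgroup `C` of an ordered group is convex if whenever `x, z ∈ C`, `y ∈ G` and
`x ≤ y ≤ z`, then `y ∈ C`. -/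
def Subgroup.IsConvex {G : Type*} [Group G] [Preorder G] (C : Subgroup G) : Prop :=
  ∀ x ∈ C, ∀ z ∈ C, ∀ y : G, x ≤ y → y ≤ z → y ∈ C

section Aux

open FreeMonoid

lemma FM.head?_append_of_ne_nil {α : Type*} (l l' : List α) (h : l ≠ []) :
    (l ++ l').head? = l.head? := by
  cases l with
  | nil => exact absurd rfl h
  | cons a t => rfl

lemma FM.fin2_cases (i : Fin 2) : i = 0 ∨ i = 1 := by
  revert i; decide

/-- A two-element prefix code (distinct first letters) gives an injective endomorphism
of the free monoid. -/
lemma FM.code_inj (f : Fin 2 → FreeMonoid (Fin 2))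
    (hne : ∀ i, FreeMonoid.toList (f i) ≠ [])
    (hhead : (FreeMonoid.toList (f 0)).head? ≠ (FreeMonoid.toList (f 1)).head?) :
    Function.Injective (FreeMonoid.lift f) := by
  have key : ∀ l₁ l₂ : List (Fin 2),
      FreeMonoid.lift f (FreeMonoid.ofList l₁) = FreeMonoid.lift f (FreeMonoid.ofList l₂) →
      l₁ = l₂ := by
    intro l₁
    induction l₁ with
    | nil =>
      intro l₂ hl
      cases l₂ with
      | nil => rfl
      | cons y t =>
        exfalso
        rw [FreeMonoid.ofList_cons, map_mul] at hl
        have hone : (FreeMonoid.ofList ([] : List (Fin 2))) = 1 := rfl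
        rw [hone, map_one] at hl
        have h2 := congrArg FreeMonoid.toList hl.symm
        rw [FreeMonoid.toList_mul, FreeMonoid.lift_eval_of] at h2
        have h4 := (List.append_eq_nil_iff.mp h2).1
        exact hne y h4
    | cons x t ih =>
      intro l₂ hl
      cases l₂ with
      | nil =>
        exfalso
        rw [FreeMonoid.ofList_cons, map_mul] at hl
        have hone : (FreeMonoid.ofList ([] : List (Fin 2))) = 1 := rfl
        rw [hone, map_one] at hl
        have h2 := congrArg FreeMonoid.toList hl
        rw [FreeMonoid.toList_mul, FreeMonoid.lift_eval_of] at h2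
        have h4 := (List.append_eq_nil_iff.mp h2).1
        exact hne x h4
      | cons y s =>
        rw [FreeMonoid.ofList_cons, FreeMonoid.ofList_cons, map_mul, map_mul,
          FreeMonoid.lift_eval_of, FreeMonoid.lift_eval_of] at hl
        have h2 := congrArg FreeMonoid.toList hl
        rw [FreeMonoid.toList_mul, FreeMonoid.toList_mul] at h2
        have hxy : x = y := by
          have hh : (FreeMonoid.toList (f x)).head? = (FreeMonoid.toList (f y)).head? := by
            have e1 := FM.head?_append_of_ne_nil (FreeMonoid.toList (f x))
              (FreeMonoid.toList ((FreeMonoid.lift f) (FreeMonoid.ofList t))) (hne x)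
            have e2 := FM.head?_append_of_ne_nil (FreeMonoid.toList (f y))
              (FreeMonoid.toList ((FreeMonoid.lift f) (FreeMonoid.ofList s))) (hne y)
            rw [← e1, ← e2, h2]
          rcases FM.fin2_cases x with rfl | rfl <;> rcases FM.fin2_cases y with rfl | rfl
          · rfl
          · exact absurd hh hhead
          · exact absurd hh.symm hhead
          · rfl
        subst hxy
        have h3 : FreeMonoid.toList (FreeMonoid.lift f (FreeMonoid.ofList t)) =
            FreeMonoid.toList (FreeMonoid.lift f (FreeMonoid.ofList s)) :=
          List.append_cancel_left h2
        have h4 : FreeMonoid.lift f (FreeMonoid.ofList t) =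
            FreeMonoid.lift f (FreeMonoid.ofList s) := by
          have := congrArg FreeMonoid.ofList h3
          exact this
        rw [ih s h4]
  intro w₁ w₂ hw
  have : FreeMonoid.toList w₁ = FreeMonoid.toList w₂ := by
    apply key
    rw [FreeMonoid.ofList_toList, FreeMonoid.ofList_toList]
    exact hw
  have := congrArg FreeMonoid.ofList this
  simpa [FreeMonoid.ofList_toList] using this

variable {G : Type*} [Monoid G]

/-- Transfer of `GeneratesFreeMonoid2` along an injective substitution. -/
lemma FM.gf2_trans {a b a' b' : G} (h : GeneratesFreeMonoid2 a b)
    (f : Fin 2 → FreeMonoid (Fin 2))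
    (hinj : Function.Injective (FreeMonoid.lift f))
    (h0 : FreeMonoid.lift (fun i : Fin 2 => if i = 0 then a else b) (f 0) = a')
    (h1 : FreeMonoid.lift (fun i : Fin 2 => if i = 0 then a else b) (f 1) = b') :
    GeneratesFreeMonoid2 a' b' := by
  set L := (FreeMonoid.lift (fun i : Fin 2 => if i = 0 then a else b) :
    FreeMonoid (Fin 2) →* G) with hL
  have hcomp : (FreeMonoid.lift (fun i : Fin 2 => if i = 0 then a' else b') :
      FreeMonoid (Fin 2) →* G) = L.comp (FreeMonoid.lift f) := by
    apply FreeMonoid.hom_eq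
    intro x
    rcases FM.fin2_cases x with rfl | rfl
    · simpa using h0.symm
    · simpa using h1.symm
  unfold GeneratesFreeMonoid2
  rw [hcomp, MonoidHom.coe_comp]
  exact Function.Injective.comp h hinj

lemma FM.gf2_swap {a b : G} (h : GeneratesFreeMonoid2 a b) : GeneratesFreeMonoid2 b a := by
  apply FM.gf2_trans h (fun i => if i = 0 then FreeMonoid.of 1 else FreeMonoid.of 0)
  · apply FM.code_inj
    · intro i; rcases FM.fin2_cases i with rfl | rfl <;> simp [FreeMonoid.toList_of]
    · simp [FreeMonoid.toList_of]
  · simp [FreeMonoid.lift_eval_of]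
  · simp [FreeMonoid.lift_eval_of]

lemma FM.gf2_mul_right {a b : G} (h : GeneratesFreeMonoid2 a b) :
    GeneratesFreeMonoid2 a (b * a) := by
  apply FM.gf2_trans h
    (fun i => if i = 0 then FreeMonoid.of 0 else FreeMonoid.of 1 * FreeMonoid.of 0)
  · apply FM.code_inj
    · intro i; rcases FM.fin2_cases i with rfl | rfl <;>
        simp [FreeMonoid.toList_of, FreeMonoid.toList_mul]
    · simp [FreeMonoid.toList_of, FreeMonoid.toList_mul]
  · simp [FreeMonoid.lift_eval_of]
  · simp [FreeMonoid.lift_eval_of]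

lemma FM.gf2_mul_left {a b : G} (h : GeneratesFreeMonoid2 a b) :
    GeneratesFreeMonoid2 (a * b) b := by
  apply FM.gf2_trans h
    (fun i => if i = 0 then FreeMonoid.of 0 * FreeMonoid.of 1 else FreeMonoid.of 1)
  · apply FM.code_inj
    · intro i; rcases FM.fin2_cases i with rfl | rfl <;>
        simp [FreeMonoid.toList_of, FreeMonoid.toList_mul]
    · simp [FreeMonoid.toList_of, FreeMonoid.toList_mul]
  · simp [FreeMonoid.lift_eval_of]
  · simp [FreeMonoid.lift_eval_of]

lemma FM.gf2_a_ne_one {a b : G} (h : GeneratesFreeMonoid2 a b) : a ≠ 1 := by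
  intro ha
  have : (FreeMonoid.of (0 : Fin 2)) = (1 : FreeMonoid (Fin 2)) := by
    apply h
    simp [FreeMonoid.lift_eval_of, ha]
  have := congrArg FreeMonoid.toList this
  simp [FreeMonoid.toList_of, FreeMonoid.toList_one] at this

lemma FM.gf2_b_ne_one {a b : G} (h : GeneratesFreeMonoid2 a b) : b ≠ 1 :=
  FM.gf2_a_ne_one (FM.gf2_swap h)

lemma FM.gf2_mul_ne_one {a b : G} (h : GeneratesFreeMonoid2 a b) : b * a ≠ 1 :=
  FM.gf2_b_ne_one (FM.gf2_mul_right h)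

end Aux

section GroupAux

variable {G : Type*} [Group G]

lemma FM.gf2_inv {a b : G} (h : GeneratesFreeMonoid2 a b) :
    GeneratesFreeMonoid2 a⁻¹ b⁻¹ := by
  have key : ∀ l : List (Fin 2),
      FreeMonoid.lift (fun i : Fin 2 => if i = 0 then a⁻¹ else b⁻¹) (FreeMonoid.ofList l)
        = (FreeMonoid.lift (fun i : Fin 2 => if i = 0 then a else b)
            (FreeMonoid.ofList l.reverse))⁻¹ := by
    intro l
    induction l with
    | nil => simp
    | cons x t ih =>
      rw [FreeMonoid.ofList_cons, map_mul, FreeMonoid.lift_eval_of, ih]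
      have hrev : (x :: t).reverse = t.reverse ++ [x] := by simp
      rw [hrev]
      have : FreeMonoid.ofList (t.reverse ++ [x]) =
          FreeMonoid.ofList t.reverse * FreeMonoid.of x := by
        rfl
      rw [this, map_mul, FreeMonoid.lift_eval_of, mul_inv_rev]
      congr 1
      split_ifs <;> rfl
  intro w₁ w₂ hw
  have h1 := key (FreeMonoid.toList w₁)
  have h2 := key (FreeMonoid.toList w₂)
  rw [FreeMonoid.ofList_toList] at h1 h2
  rw [h1, h2] at hw
  have := inv_injective hw
  have := h this
  have := congrArg FreeMonoid.toList this
  simp only [FreeMonoid.ofList] at this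
  have : FreeMonoid.toList w₁ = FreeMonoid.toList w₂ := by
    have := List.reverse_injective this
    exact this
  have := congrArg FreeMonoid.ofList this
  simpa [FreeMonoid.ofList_toList] using this

/-- Milnor-type lemma: if conjugation by `t` maps `K` into `K` and `u ∈ K` is not in
`t K t⁻¹`, then `t` and `u * t` generate a free monoid of rank 2. -/
lemma FM.free_pair (K : Subgroup G) (t u : G)
    (Hsub : ∀ k ∈ K, t * k * t⁻¹ ∈ K) (Hu : u ∈ K)
    (Hnot : ∀ k ∈ K, u ≠ t * k * t⁻¹) :
    GeneratesFreeMonoid2 t (u * t) := by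
  classical
  set Cf : List (Fin 2) → G := fun l =>
    l.foldr (fun i x => (if i = 0 then 1 else u) * (t * x * t⁻¹)) 1 with hCf
  have Cf_nil : Cf [] = 1 := rfl
  have Cf_cons : ∀ i l, Cf (i :: l) = (if i = 0 then 1 else u) * (t * Cf l * t⁻¹) :=
    fun _ _ => rfl
  have mem : ∀ l, Cf l ∈ K := by
    intro l
    induction l with
    | nil => exact K.one_mem
    | cons i l ih =>
      rw [Cf_cons]
      refine K.mul_mem ?_ (Hsub _ ih)
      split_ifs
      · exact K.one_mem
      · exact Hu
  have conjpow : ∀ j : ℕ, ∀ k ∈ K, t ^ j * k * (t ^ j)⁻¹ ∈ K := by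
    intro j
    induction j with
    | zero => intro k hk; simpa using hk
    | succ n ih =>
      intro k hk
      have he : t ^ (n + 1) * k * (t ^ (n + 1))⁻¹
          = t * (t ^ n * k * (t ^ n)⁻¹) * t⁻¹ := by
        rw [pow_succ']
        group
      rw [he]
      exact Hsub _ (ih k hk)
  have tpow : ∀ n : ℕ, t ^ (n + 1) ∈ K → False := by
    intro n hmem
    have hk0 : (t ^ (n + 1))⁻¹ * u * t ^ (n + 1) ∈ K :=
      K.mul_mem (K.mul_mem (K.inv_mem hmem) Hu) hmem
    have hinner := conjpow n _ hk0
    apply Hnot _ hinner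
    rw [pow_succ']
    group
  have val : ∀ l : List (Fin 2),
      FreeMonoid.lift (fun i : Fin 2 => if i = 0 then t else u * t) (FreeMonoid.ofList l)
        = Cf l * t ^ l.length := by
    intro l
    induction l with
    | nil => simp [Cf_nil]
    | cons i l ih =>
      rw [FreeMonoid.ofList_cons, map_mul, FreeMonoid.lift_eval_of, ih, Cf_cons,
        List.length_cons, pow_succ']
      generalize Cf l = X
      generalize t ^ l.length = Y
      split_ifs
      · group
      · group
  have cinj : ∀ l₁ l₂ : List (Fin 2), l₁.length = l₂.length → Cf l₁ = Cf l₂ → l₁ = l₂ := by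
    intro l₁
    induction l₁ with
    | nil =>
      intro l₂ hlen _
      cases l₂ with
      | nil => rfl
      | cons y s => simp at hlen
    | cons x l ih =>
      intro l₂ hlen hc
      cases l₂ with
      | nil => simp at hlen
      | cons y s =>
        rw [Cf_cons, Cf_cons] at hc
        have hlen' : l.length = s.length := by simpa using hlen
        by_cases hx : x = 0 <;> by_cases hy : y = 0
        · rw [if_pos hx, if_pos hy, one_mul, one_mul] at hc
          have : Cf l = Cf s := by
            have := mul_right_cancel hc
            exact mul_left_cancel this
          rw [hx, hy, ih s hlen' this]
        · exfalso
          rw [if_pos hx, if_neg hy, one_mul] at hc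
          apply Hnot (Cf l * (Cf s)⁻¹) (K.mul_mem (mem l) (K.inv_mem (mem s)))
          have h5 : u = (t * Cf l * t⁻¹) * (t * Cf s * t⁻¹)⁻¹ := by
            rw [hc]
            group
          rw [h5]
          group
        · exfalso
          rw [if_neg hx, if_pos hy, one_mul] at hc
          apply Hnot (Cf s * (Cf l)⁻¹) (K.mul_mem (mem s) (K.inv_mem (mem l)))
          have h5 : u = (t * Cf s * t⁻¹) * (t * Cf l * t⁻¹)⁻¹ := by
            rw [← hc]
            group
          rw [h5]
          group
        · rw [if_neg hx, if_neg hy] at hc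
          have h2 : Cf l = Cf s := by
            have := mul_left_cancel hc
            have := mul_right_cancel this
            exact mul_left_cancel this
          have hx1 : x = 1 := by rcases FM.fin2_cases x with h | h; exact absurd h hx; exact h
          have hy1 : y = 1 := by rcases FM.fin2_cases y with h | h; exact absurd h hy; exact h
          rw [hx1, hy1, ih s hlen' h2]
  have keylen : ∀ l₁ l₂ : List (Fin 2), l₁.length ≤ l₂.length →
      Cf l₁ * t ^ l₁.length = Cf l₂ * t ^ l₂.length → l₁.length = l₂.length := by
    intro l₁ l₂ hle heq
    by_contra hne
    have hlt : l₁.length < l₂.length := lt_of_le_of_ne hle hne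
    obtain ⟨m, hm⟩ : ∃ m : ℕ, l₂.length = (m + 1) + l₁.length :=
      ⟨l₂.length - l₁.length - 1, by omega⟩
    apply tpow m
    have : t ^ l₂.length = t ^ (m + 1) * t ^ l₁.length := by
      rw [hm, pow_add]
    rw [this] at heq
    have h3 : (Cf l₂)⁻¹ * Cf l₁ = t ^ (m + 1) := by
      have := heq
      calc (Cf l₂)⁻¹ * Cf l₁
          = (Cf l₂)⁻¹ * (Cf l₁ * t ^ l₁.length) * (t ^ l₁.length)⁻¹ := by group
        _ = (Cf l₂)⁻¹ * (Cf l₂ * (t ^ (m + 1) * t ^ l₁.length)) * (t ^ l₁.length)⁻¹ := by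
            rw [heq]
        _ = t ^ (m + 1) := by group
    rw [← h3]
    exact K.mul_mem (K.inv_mem (mem l₂)) (mem l₁)
  intro w₁ w₂ hw
  have e1 := val (FreeMonoid.toList w₁)
  have e2 := val (FreeMonoid.toList w₂)
  rw [FreeMonoid.ofList_toList] at e1 e2
  rw [e1, e2] at hw
  set l₁ := FreeMonoid.toList w₁ with hl₁
  set l₂ := FreeMonoid.toList w₂ with hl₂
  have hlen : l₁.length = l₂.length := by
    rcases le_total l₁.length l₂.length with hle | hle
    · exact keylen l₁ l₂ hle hw
    · exact (keylen l₂ l₁ hle hw.symm).symm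
  have hcf : Cf l₁ = Cf l₂ := by
    rw [hlen] at hw
    exact mul_right_cancel hw
  have : l₁ = l₂ := cinj l₁ l₂ hlen hcf
  have := congrArg FreeMonoid.ofList this
  exact this

end GroupAux

section OrderAux

variable {G : Type*} [Group G] [LinearOrder G]
  [CovariantClass G G (· * ·) (· < ·)]
  [CovariantClass G G (Function.swap (· * ·)) (· < ·)]

instance (priority := 100) FM.covLe : CovariantClass G G (· * ·) (· ≤ ·) :=
  covariantClass_le_of_lt G G (· * ·)

instance (priority := 100) FM.covLeSwap : CovariantClass G G (Function.swap (· * ·)) (· ≤ ·) :=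
  covariantClass_le_of_lt G G (Function.swap (· * ·))

lemma FM.lt_of_convex (K : Subgroup G) (hK : K.IsConvex) {y : G}
    (hy : y ∉ K) (h1 : 1 < y) {x : G} (hx : x ∈ K) : x < y := by
  by_contra hcon
  push_neg at hcon
  exact hy (hK 1 K.one_mem x hx y h1.le hcon)

lemma FM.subset_of_convex_pos (K K' : Subgroup G) (hK : K.IsConvex) (hK' : K'.IsConvex)
    {y : G} (hyK' : y ∈ K') (hyK : y ∉ K) (h1 : 1 < y) : ∀ x ∈ K, x ∈ K' := by
  intro x hx
  have hxy : x < y := FM.lt_of_convex K hK hyK h1 hx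
  have hxinv : x⁻¹ < y := FM.lt_of_convex K hK hyK h1 (K.inv_mem hx)
  have hyx : y⁻¹ < x := by
    have h2 : y⁻¹ * x⁻¹ < y⁻¹ * y := mul_lt_mul_right hxinv y⁻¹
    rw [inv_mul_cancel] at h2
    have h3 : y⁻¹ * x⁻¹ * x < 1 * x := mul_lt_mul_left h2 x
    simpa [mul_assoc] using h3
  exact hK' y⁻¹ (K'.inv_mem hyK') y hyK' x hyx.le hxy.le

lemma FM.subset_of_convex (K K' : Subgroup G) (hK : K.IsConvex) (hK' : K'.IsConvex)
    {y : G} (hyK' : y ∈ K') (hyK : y ∉ K) : ∀ x ∈ K, x ∈ K' := by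
  rcases lt_trichotomy 1 y with h1 | h1 | h1
  · exact FM.subset_of_convex_pos K K' hK hK' hyK' hyK h1
  · exact absurd (h1 ▸ K.one_mem) hyK
  · have h2 : 1 < y⁻¹ := by
      have := mul_lt_mul_left h1 y⁻¹
      simpa using this
    exact FM.subset_of_convex_pos K K' hK hK' (K'.inv_mem hyK')
      (fun hmem => hyK (by simpa using K.inv_mem hmem)) h2

/-- The conjugate subgroup `g C g⁻¹`, described as `{x | g⁻¹ x g ∈ C}`. -/
def FM.conjSub (g : G) (C : Subgroup G) : Subgroup G where
  carrier := {x | g⁻¹ * x * g ∈ C}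
  one_mem' := by simpa using C.one_mem
  mul_mem' := by
    intro a b ha hb
    have he : g⁻¹ * (a * b) * g = (g⁻¹ * a * g) * (g⁻¹ * b * g) := by group
    show g⁻¹ * (a * b) * g ∈ C
    rw [he]
    exact C.mul_mem ha hb
  inv_mem' := by
    intro a ha
    have he : g⁻¹ * a⁻¹ * g = (g⁻¹ * a * g)⁻¹ := by group
    show g⁻¹ * a⁻¹ * g ∈ C
    rw [he]
    exact C.inv_mem ha

lemma FM.mem_conjSub {g x : G} {C : Subgroup G} :
    x ∈ FM.conjSub g C ↔ g⁻¹ * x * g ∈ C := Iff.rfl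

lemma FM.conjSub_convex {g : G} {C : Subgroup G} (hC : C.IsConvex) :
    (FM.conjSub g C).IsConvex := by
  intro x hx z hz y hxy hyz
  rw [FM.mem_conjSub] at hx hz ⊢
  have h1 : g⁻¹ * x * g ≤ g⁻¹ * y * g :=
    mul_le_mul_left (mul_le_mul_right hxy g⁻¹) g
  have h2 : g⁻¹ * y * g ≤ g⁻¹ * z * g :=
    mul_le_mul_left (mul_le_mul_right hyz g⁻¹) g
  exact hC _ hx _ hz _ h1 h2

/-- Turn any pair generating a free monoid into a positive such pair. -/
lemma FM.exists_pos_pair {p q : G} (h : GeneratesFreeMonoid2 p q) :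
    ∃ a b : G, 1 < a ∧ 1 < b ∧ GeneratesFreeMonoid2 a b := by
  have mixed : ∀ p q : G, 1 < p → q < 1 → GeneratesFreeMonoid2 p q →
      ∃ a b : G, 1 < a ∧ 1 < b ∧ GeneratesFreeMonoid2 a b := by
    intro p q hp hq h
    rcases lt_trichotomy 1 (q * p) with h1 | h1 | h1
    · exact ⟨p, q * p, hp, h1, FM.gf2_mul_right h⟩
    · exact absurd h1.symm (FM.gf2_mul_ne_one h)
    · have hq' : q < p⁻¹ := by
        have h2 : q * p * p⁻¹ < 1 * p⁻¹ := mul_lt_mul_left h1 p⁻¹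
        rwa [mul_inv_cancel_right, one_mul] at h2
      have hpq : p * q < 1 := by
        have h2 : p * q < p * p⁻¹ := mul_lt_mul_right hq' p
        simpa using h2
      have h2 : GeneratesFreeMonoid2 (p * q) q := FM.gf2_mul_left h
      have h3 := FM.gf2_inv h2
      refine ⟨(p * q)⁻¹, q⁻¹, ?_, ?_, h3⟩
      · have h6 : p * q * (p * q)⁻¹ < 1 * (p * q)⁻¹ := mul_lt_mul_left hpq (p * q)⁻¹
        rwa [mul_inv_cancel, one_mul] at h6
      · have := mul_lt_mul_left hq q⁻¹
        simpa using this
  rcases lt_trichotomy 1 p with hp | hp | hp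
  · rcases lt_trichotomy 1 q with hq | hq | hq
    · exact ⟨p, q, hp, hq, h⟩
    · exact absurd hq.symm (FM.gf2_b_ne_one h)
    · exact mixed p q hp hq h
  · exact absurd hp.symm (FM.gf2_a_ne_one h)
  · rcases lt_trichotomy 1 q with hq | hq | hq
    · exact mixed q p hq hp (FM.gf2_swap h)
    · exact absurd hq.symm (FM.gf2_b_ne_one h)
    · have h2 := FM.gf2_inv h
      refine ⟨p⁻¹, q⁻¹, ?_, ?_, h2⟩
      · have := mul_lt_mul_left hp p⁻¹
        simpa using this
      · have := mul_lt_mul_left hq q⁻¹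
        simpa using this

end OrderAux

/-- Let `(G,<)` be an ordered group possessing a convex subgroup `C` which
is not normal in `G`. Then `G` contains a noncommutative free monoid: there exist `a, b ∈ G`
with `1 < a` and `1 < b` generating a free monoid of rank 2. -/
theorem free_monoid_of_nonnormal_convex_subgroup (G : Type*) [Group G] [LinearOrder G]
    [CovariantClass G G (· * ·) (· < ·)]
    [CovariantClass G G (Function.swap (· * ·)) (· < ·)]
    (C : Subgroup G) (hC : C.IsConvex) (hCnn : ¬ C.Normal) :
    ∃ a b : G, 1 < a ∧ 1 < b ∧ GeneratesFreeMonoid2 a b := by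
  classical
  -- get a witness of non-normality
  have hnn : ∃ c ∈ C, ∃ g : G, g * c * g⁻¹ ∉ C := by
    by_contra hcon
    push_neg at hcon
    exact hCnn ⟨fun n hn g => hcon n hn g⟩
  obtain ⟨c₀, hc₀, g₀, hg₀⟩ := hnn
  -- the conjugate subgroup K₁ = g₀ C g₀⁻¹
  set K₁ := FM.conjSub g₀ C with hK₁
  have hK₁conv : K₁.IsConvex := FM.conjSub_convex hC
  have hyK₁ : g₀ * c₀ * g₀⁻¹ ∈ K₁ := by
    rw [FM.mem_conjSub]
    have : g₀⁻¹ * (g₀ * c₀ * g₀⁻¹) * g₀ = c₀ := by group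
    rw [this]
    exact hc₀
  -- C ⊆ K₁ by the chain property of convex subgroups
  have hsubset : ∀ x ∈ C, x ∈ K₁ := FM.subset_of_convex C K₁ hC hK₁conv hyK₁ hg₀
  set t := g₀⁻¹ with ht
  have Hsub : ∀ k ∈ C, t * k * t⁻¹ ∈ C := by
    intro k hk
    have := hsubset k hk
    rw [FM.mem_conjSub] at this
    simpa [ht, mul_assoc] using this
  have Hnot : ∃ u ∈ C, ∀ k ∈ C, u ≠ t * k * t⁻¹ := by
    by_contra hcon
    push_neg at hcon
    obtain ⟨k, hk, hek⟩ := hcon c₀ hc₀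
    apply hg₀
    have : g₀ * c₀ * g₀⁻¹ = k := by
      rw [hek, ht]
      group
    rw [this]
    exact hk
  obtain ⟨u, Hu, Hnot⟩ := Hnot
  have hfree : GeneratesFreeMonoid2 t (u * t) := FM.free_pair C t u Hsub Hu Hnot
  exact FM.exists_pos_pair hfree
end

section
/- Let (G,<) be an ordered group in which every convex jump is central, i.e., [H,G] ⊆ N for every convex jump (N,H) of (G,<). Then every convex subgroup of (G,<) is normal in G. -/
/-- A pair `(N, H)` of convex subgroups is a convex jump if `N ⊊ H` and no convex subgroup
lies strictly between `N` and `H`. -/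
def Subgroup.IsConvexJump {G : Type*} [Group G] [Preorder G] (N H : Subgroup G) : Prop :=
  N.IsConvex ∧ H.IsConvex ∧ N < H ∧ ∀ K : Subgroup G, K.IsConvex → ¬(N < K ∧ K < H)

section Aux

variable {G : Type*} [Group G] [LinearOrder G]
    [CovariantClass G G (· * ·) (· < ·)]
    [CovariantClass G G (Function.swap (· * ·)) (· < ·)]

/-- Convex subgroups of a linearly ordered group form a chain. -/
lemma convex_total {A B : Subgroup G} (hA : A.IsConvex) (hB : B.IsConvex) :
    A ≤ B ∨ B ≤ A := by
  haveI : CovariantClass G G (· * ·) (· ≤ ·) := covariantClass_le_of_lt _ _ _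
  haveI : CovariantClass G G (Function.swap (· * ·)) (· ≤ ·) := covariantClass_le_of_lt _ _ _
  by_cases h : A ≤ B
  · exact Or.inl h
  · right
    obtain ⟨a, ha, haB⟩ := SetLike.not_le_iff_exists.mp h
    intro b hb
    have hb' : max b b⁻¹ ∈ B := by
      rcases le_total b b⁻¹ with h1 | h1
      · rw [max_eq_right h1]; exact B.inv_mem hb
      · rw [max_eq_left h1]; exact hb
    have ha' : max a a⁻¹ ∈ A := by
      rcases le_total a a⁻¹ with h1 | h1
      · rw [max_eq_right h1]; exact A.inv_mem ha
      · rw [max_eq_left h1]; exact ha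
    rcases le_total (max a a⁻¹) (max b b⁻¹) with hle | hle
    · exact absurd (hB _ (B.inv_mem hb') _ hb' a
        (inv_le'.mpr ((le_max_right a a⁻¹).trans hle))
        ((le_max_left a a⁻¹).trans hle)) haB
    · exact hA _ (A.inv_mem ha') _ ha' b
        (inv_le'.mpr ((le_max_right b b⁻¹).trans hle))
        ((le_max_left b b⁻¹).trans hle)

end Aux

open scoped commutatorElement

/-- Let `(G,<)` be an ordered group in which every convex jump is central,
i.e. `[H,G] ⊆ N` for every convex jump `(N,H)`. Then every convex subgroup of `(G,<)` is
normal in `G`. -/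
theorem convex_subgroups_normal_of_central_jumps (G : Type*) [Group G] [LinearOrder G]
    [CovariantClass G G (· * ·) (· < ·)]
    [CovariantClass G G (Function.swap (· * ·)) (· < ·)]
    (hcentral : ∀ N H : Subgroup G, N.IsConvexJump H → ⁅H, (⊤ : Subgroup G)⁆ ≤ N) :
    ∀ C : Subgroup G, C.IsConvex → C.Normal := by
  intro C hC
  constructor
  intro x hx g
  by_cases hx1 : x = 1
  · simpa [hx1] using C.one_mem
  -- the smallest convex subgroup containing x
  set H : Subgroup G := sInf {K : Subgroup G | K.IsConvex ∧ x ∈ K} with hHdef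
  have hHconv : H.IsConvex := by
    intro a ha c hc y h1 h2
    rw [hHdef, Subgroup.mem_sInf] at *
    intro K hK
    exact hK.1 a (ha K hK) c (hc K hK) y h1 h2
  have hxH : x ∈ H := by
    rw [hHdef, Subgroup.mem_sInf]; exact fun K hK => hK.2
  have hHmin : ∀ K : Subgroup G, K.IsConvex → x ∈ K → H ≤ K := by
    intro K hK hxK
    exact sInf_le ⟨hK, hxK⟩
  -- the union of convex subgroups not containing x
  have hbotconv : (⊥ : Subgroup G).IsConvex := by
    intro a ha c hc y h1 h2
    simp only [Subgroup.mem_bot] at *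
    subst ha; subst hc; exact le_antisymm h2 h1
  set S : Set G := {y : G | ∃ K : Subgroup G, K.IsConvex ∧ x ∉ K ∧ y ∈ K} with hSdef
  have hdir : ∀ y₁ ∈ S, ∀ y₂ ∈ S, ∃ K : Subgroup G,
      K.IsConvex ∧ x ∉ K ∧ y₁ ∈ K ∧ y₂ ∈ K := by
    rintro y₁ ⟨K₁, hK₁, hxK₁, hy₁⟩ y₂ ⟨K₂, hK₂, hxK₂, hy₂⟩
    rcases convex_total hK₁ hK₂ with hle | hle
    · exact ⟨K₂, hK₂, hxK₂, hle hy₁, hy₂⟩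
    · exact ⟨K₁, hK₁, hxK₁, hy₁, hle hy₂⟩
  set N : Subgroup G :=
    { carrier := S
      one_mem' := ⟨⊥, hbotconv, by simpa using hx1, Subgroup.one_mem _⟩
      mul_mem' := by
        intro a b ha hb
        obtain ⟨K, hK, hxK, haK, hbK⟩ := hdir a ha b hb
        exact ⟨K, hK, hxK, K.mul_mem haK hbK⟩
      inv_mem' := by
        rintro a ⟨K, hK, hxK, haK⟩
        exact ⟨K, hK, hxK, K.inv_mem haK⟩ } with hNdef
  have hNconv : N.IsConvex := by
    rintro a ⟨K₁, hK₁, hxK₁, haK₁⟩ c ⟨K₂, hK₂, hxK₂, hcK₂⟩ y h1 h2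
    obtain ⟨K, hK, hxK, haK, hcK⟩ := hdir a ⟨K₁, hK₁, hxK₁, haK₁⟩ c ⟨K₂, hK₂, hxK₂, hcK₂⟩
    exact ⟨K, hK, hxK, hK a haK c hcK y h1 h2⟩
  have hxN : x ∉ N := by
    rintro ⟨K, hK, hxK, hxK'⟩; exact hxK hxK'
  have hNH : N ≤ H := by
    rintro y ⟨K, hK, hxK, hyK⟩
    rcases convex_total hK hHconv with hle | hle
    · exact hle hyK
    · exact absurd (hHmin K hK (hle hxH) hxH) (fun _ => hxK (hle hxH))
  have hjump : N.IsConvexJump H := by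
    refine ⟨hNconv, hHconv, lt_of_le_of_ne hNH ?_, ?_⟩
    · intro h; rw [h] at hxN; exact hxN hxH
    · rintro K hK ⟨hNK, hKH⟩
      by_cases hxK : x ∈ K
      · exact absurd (hHmin K hK hxK) (not_le_of_gt hKH)
      · exact absurd (fun y hy => (⟨K, hK, hxK, hy⟩ : y ∈ N)) (not_le_of_gt hNK)
  have hkey : ⁅H, (⊤ : Subgroup G)⁆ ≤ N := hcentral N H hjump
  have hcomm : ⁅g, x⁆ ∈ N := by
    have : ⁅x, g⁆ ∈ ⁅H, (⊤ : Subgroup G)⁆ :=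
      Subgroup.commutator_mem_commutator hxH (Subgroup.mem_top g)
    have h2 : ⁅g, x⁆ = ⁅x, g⁆⁻¹ := by rw [commutatorElement_inv]
    rw [h2]
    exact N.inv_mem (hkey this)
  have hHC : H ≤ C := hHmin C hC hx
  have : g * x * g⁻¹ = ⁅g, x⁆ * x := by group
  rw [this]
  exact C.mul_mem (hHC (hNH hcomm)) hx
end

section
/- Let (G,<) be an ordered group in which every convex jump is central, i.e., [H,G] ⊆ N for every convex jump (N,H) of (G,<). Let x, y ∈ G be elements that do not commute ([x,y] ≠ 1), and let A be the subgroup of G generated by {x,y}. Then there exists a normal subgroup B of A such that: (i) [x,y] ∉ B, so the quotient A/B is noncommutative; (ii) A/B is torsion-free, i.e., for every a ∈ A and every integer n ≥ 1, aⁿ ∈ B implies a ∈ B; and (iii) [[A,A],A] ⊆ B, so A/B is nilpotent of class two. -/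
open scoped commutatorElement

section AuxChain

variable {G : Type*} [Group G] [LinearOrder G]
  [CovariantClass G G (· * ·) (· < ·)]
  [CovariantClass G G (Function.swap (· * ·)) (· < ·)]

theorem aux_mabs_mem {C : Subgroup G} (a : G) (ha : a ∈ C) : max a a⁻¹ ∈ C := by
  rcases max_choice a a⁻¹ with h | h <;> rw [h]
  · exact ha
  · exact inv_mem ha

theorem aux_mem_of_mabs_mem {C : Subgroup G} (a : G) (ha : max a a⁻¹ ∈ C) : a ∈ C := by
  rcases max_choice a a⁻¹ with h | h <;> rw [h] at ha
  · exact ha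
  · simpa using inv_mem ha

theorem aux_one_le_mabs (a : G) : 1 ≤ max a a⁻¹ := by
  haveI := covariantClass_le_of_lt G G (· * ·)
  rcases le_total 1 a with h | h
  · exact le_trans h (le_max_left _ _)
  · exact le_trans (Left.one_le_inv_iff.mpr h) (le_max_right _ _)

/-- Convex subgroups of an ordered group form a chain. -/
theorem aux_convex_chain (C D : Subgroup G) (hC : C.IsConvex) (hD : D.IsConvex) :
    C ≤ D ∨ D ≤ C := by
  by_cases h : C ≤ D
  · exact Or.inl h
  · right
    obtain ⟨c, hcC, hcD⟩ := SetLike.not_le_iff_exists.mp h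
    intro d hd
    have hmcC : max c c⁻¹ ∈ C := aux_mabs_mem c hcC
    have hmcD : max c c⁻¹ ∉ D := fun hm => hcD (aux_mem_of_mabs_mem c hm)
    have hmdD : max d d⁻¹ ∈ D := aux_mabs_mem d hd
    have hle : max d d⁻¹ ≤ max c c⁻¹ := by
      by_contra hlt
      push_neg at hlt
      exact hmcD (hD 1 (one_mem D) (max d d⁻¹) hmdD (max c c⁻¹) (aux_one_le_mabs c) hlt.le)
    exact aux_mem_of_mabs_mem d
      (hC 1 (one_mem C) (max c c⁻¹) hmcC (max d d⁻¹) (aux_one_le_mabs d) hle)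

end AuxChain

section AuxCentral

/-- In any group, all elements of the subgroup generated by two commuting elements
commute with each other. -/
theorem aux_comm_of_closure {Q : Type*} [Group Q] {u v : Q} (huv : Commute u v)
    {a b : Q} (ha : a ∈ Subgroup.closure ({u, v} : Set Q))
    (hb : b ∈ Subgroup.closure ({u, v} : Set Q)) : Commute a b := by
  have key : ∀ g ∈ Subgroup.closure ({u, v} : Set Q), Commute u g ∧ Commute v g := by
    intro g hg
    induction hg using Subgroup.closure_induction with
    | mem w hw =>
      rcases hw with rfl | hw
      · exact ⟨Commute.refl _, huv.symm⟩
      · rw [Set.mem_singleton_iff] at hw; subst hw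
        exact ⟨huv, Commute.refl _⟩
    | one => exact ⟨Commute.one_right _, Commute.one_right _⟩
    | mul p q hp hq ihp ihq => exact ⟨ihp.1.mul_right ihq.1, ihp.2.mul_right ihq.2⟩
    | inv p hp ihp => exact ⟨ihp.1.inv_right, ihp.2.inv_right⟩
  induction ha using Subgroup.closure_induction with
  | mem w hw =>
    rcases hw with rfl | hw
    · exact (key b hb).1
    · rw [Set.mem_singleton_iff] at hw; subst hw
      exact (key b hb).2
  | one => exact Commute.one_left _
  | mul p q hp hq ihp ihq => exact ihp.mul_left ihq
  | inv p hp ihp => exact ihp.inv_left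

/-- If `⁅u, v⁆` is central, then every element of `⁅⟨u,v⟩, ⟨u,v⟩⁆` is central. -/
theorem aux_central_of_commutator_central {Q : Type*} [Group Q] (u v : Q)
    (h : ∀ q : Q, Commute ⁅u, v⁆ q) :
    ∀ g ∈ ⁅Subgroup.closure ({u, v} : Set Q), Subgroup.closure ({u, v} : Set Q)⁆,
      ∀ q : Q, Commute g q := by
  have hz : ⁅u, v⁆ ∈ Subgroup.center Q :=
    Subgroup.mem_center_iff.mpr fun g => ((h g).symm).eq
  set Z := Subgroup.center Q with hZ
  let ρ := QuotientGroup.mk' Z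
  have hcomm : Commute (ρ u) (ρ v) := by
    rw [← commutatorElement_eq_one_iff_commute, ← map_commutatorElement,
      ← MonoidHom.mem_ker, QuotientGroup.ker_mk']
    exact hz
  have hle : ⁅Subgroup.closure ({u, v} : Set Q), Subgroup.closure ({u, v} : Set Q)⁆ ≤ Z := by
    refine Subgroup.commutator_le.mpr fun g₁ h₁ g₂ h₂ => ?_
    have m1 : ρ g₁ ∈ Subgroup.closure ({ρ u, ρ v} : Set (Q ⧸ Z)) := by
      have := Subgroup.mem_map_of_mem ρ h₁
      rwa [MonoidHom.map_closure, Set.image_insert_eq, Set.image_singleton] at this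
    have m2 : ρ g₂ ∈ Subgroup.closure ({ρ u, ρ v} : Set (Q ⧸ Z)) := by
      have := Subgroup.mem_map_of_mem ρ h₂
      rwa [MonoidHom.map_closure, Set.image_insert_eq, Set.image_singleton] at this
    have h1 : ρ ⁅g₁, g₂⁆ = 1 := by
      rw [map_commutatorElement, commutatorElement_eq_one_iff_commute]
      exact aux_comm_of_closure hcomm m1 m2
    rw [← QuotientGroup.ker_mk' Z]
    exact h1
  intro g hg q
  exact (Subgroup.mem_center_iff.mp (hle hg) q).symm

end AuxCentral

/-- Let `(G,<)` be an ordered group in which every convex jump is central.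
Let `x, y ∈ G` be noncommuting elements and let `A = ⟨x, y⟩`. Then there is a normal
subgroup `B` of `A` such that `[x,y] ∉ B` (so `A/B` is noncommutative), `A/B` is
torsion-free, and `[[A,A],A] ⊆ B` (so `A/B` is nilpotent of class two). -/
theorem exists_normal_with_torsionfree_class_two_quotient (G : Type*) [Group G]
    [LinearOrder G]
    [CovariantClass G G (· * ·) (· < ·)]
    [CovariantClass G G (Function.swap (· * ·)) (· < ·)]
    (hcentral : ∀ N H : Subgroup G, N.IsConvexJump H → ⁅H, (⊤ : Subgroup G)⁆ ≤ N)
    (x y : G) (hxy : ⁅x, y⁆ ≠ 1) :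
    ∃ B : Subgroup G, B ≤ Subgroup.closure {x, y} ∧
      (∀ b ∈ B, ∀ a ∈ Subgroup.closure {x, y}, a * b * a⁻¹ ∈ B) ∧
      ⁅x, y⁆ ∉ B ∧
      (∀ a ∈ Subgroup.closure {x, y}, ∀ n : ℕ, 1 ≤ n → a ^ n ∈ B → a ∈ B) ∧
      ⁅⁅Subgroup.closure {x, y}, Subgroup.closure {x, y}⁆,
          Subgroup.closure ({x, y} : Set G)⁆ ≤ B := by
  haveI := covariantClass_le_of_lt G G (· * ·)
  haveI := covariantClass_le_of_lt G G (Function.swap (· * ·))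
  set c := ⁅x, y⁆ with hc
  set A := Subgroup.closure ({x, y} : Set G) with hA
  have hbot_conv : (⊥ : Subgroup G).IsConvex := by
    intro a ha b hb z h1 h2
    rw [Subgroup.mem_bot] at *
    subst ha; subst hb
    exact le_antisymm h2 h1
  -- The union of all convex subgroups not containing `c`
  let N : Subgroup G :=
    { carrier := {g | ∃ K : Subgroup G, K.IsConvex ∧ c ∉ K ∧ g ∈ K}
      one_mem' := ⟨⊥, hbot_conv, by simpa using hxy, one_mem _⟩
      mul_mem' := by
        rintro a b ⟨K1, h1, h1c, ha⟩ ⟨K2, h2, h2c, hb⟩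
        rcases aux_convex_chain K1 K2 h1 h2 with h | h
        · exact ⟨K2, h2, h2c, mul_mem (h ha) hb⟩
        · exact ⟨K1, h1, h1c, mul_mem ha (h hb)⟩
      inv_mem' := by
        rintro a ⟨K, h, hc', ha⟩
        exact ⟨K, h, hc', inv_mem ha⟩ }
  have hNmem : ∀ g : G, g ∈ N ↔ ∃ K : Subgroup G, K.IsConvex ∧ c ∉ K ∧ g ∈ K :=
    fun g => Iff.rfl
  have hNconv : N.IsConvex := by
    rintro a ⟨K1, h1, h1c, ha⟩ b ⟨K2, h2, h2c, hb⟩ z hz1 hz2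
    rcases aux_convex_chain K1 K2 h1 h2 with h | h
    · exact (hNmem z).mpr ⟨K2, h2, h2c, h2 a (h ha) b hb z hz1 hz2⟩
    · exact (hNmem z).mpr ⟨K1, h1, h1c, h1 a ha b (h hb) z hz1 hz2⟩
  have hcN : c ∉ N := by
    rintro ⟨K, hK, hKc, hmem⟩
    exact hKc hmem
  -- The intersection of all convex subgroups containing `c`
  let H : Subgroup G := sInf {K | K.IsConvex ∧ c ∈ K}
  have hHconv : H.IsConvex := by
    intro a ha b hb z h1 h2
    rw [Subgroup.mem_sInf] at *
    intro K hK
    exact hK.1 a (ha K hK) b (hb K hK) z h1 h2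
  have hcH : c ∈ H := Subgroup.mem_sInf.mpr fun K hK => hK.2
  have hNH : N ≤ H := by
    rintro g ⟨K, hK, hKc, hg⟩
    rw [Subgroup.mem_sInf]
    intro K' hK'
    rcases aux_convex_chain K K' hK hK'.1 with h | h
    · exact h hg
    · exact absurd (h hK'.2) hKc
  have hjump : N.IsConvexJump H := by
    refine ⟨hNconv, hHconv, lt_of_le_of_ne hNH (fun e => hcN (by rw [e]; exact hcH)), ?_⟩
    rintro K hK ⟨h1, h2⟩
    by_cases hcK : c ∈ K
    · exact absurd (sInf_le (show K ∈ {K | K.IsConvex ∧ c ∈ K} from ⟨hK, hcK⟩)) h2.not_ge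
    · exact absurd (fun g hg => (hNmem g).mpr ⟨K, hK, hcK, hg⟩) h1.not_ge
  have hHN : ⁅H, (⊤ : Subgroup G)⁆ ≤ N := hcentral N H hjump
  haveI hNnorm : N.Normal := by
    constructor
    intro n hn g
    have h1 : ⁅g, n⁆ ∈ N := by
      have h2 := Subgroup.commutator_mem_commutator (Subgroup.mem_top g) (hNH hn)
      rw [Subgroup.commutator_comm] at h2
      exact hHN h2
    have h3 : g * n * g⁻¹ = ⁅g, n⁆ * n := by group
    rw [h3]
    exact mul_mem h1 hn
  set π := QuotientGroup.mk' N with hπ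
  have hker : π.ker = N := QuotientGroup.ker_mk' N
  have hπcentral : ∀ q : G ⧸ N, Commute ⁅π x, π y⁆ q := by
    intro q
    obtain ⟨g, rfl⟩ := QuotientGroup.mk'_surjective N q
    have h1 : ⁅c, g⁆ ∈ N := hHN (Subgroup.commutator_mem_commutator hcH (Subgroup.mem_top g))
    rw [← map_commutatorElement, ← hc, ← commutatorElement_eq_one_iff_commute,
      ← map_commutatorElement, ← MonoidHom.mem_ker, hker]
    exact h1
  have hselfA : ∀ a ∈ A, ∀ b ∈ A, ⁅a, b⁆ ∈ A := by
    intro a ha b hb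
    rw [commutatorElement_def]
    exact mul_mem (mul_mem (mul_mem ha hb) (inv_mem ha)) (inv_mem hb)
  refine ⟨N ⊓ A, inf_le_right, ?_, ?_, ?_, ?_⟩
  · -- normality
    rintro b hb a haA
    rw [Subgroup.mem_inf] at hb ⊢
    exact ⟨hNnorm.conj_mem b hb.1 a, mul_mem (mul_mem haA hb.2) (inv_mem haA)⟩
  · -- noncommutative
    rw [Subgroup.mem_inf]
    rintro ⟨h1, _⟩
    exact hcN h1
  · -- torsion-free
    intro a haA n hn hpow
    rw [Subgroup.mem_inf] at hpow ⊢
    refine ⟨?_, haA⟩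
    obtain ⟨m, rfl⟩ : ∃ m, n = m + 1 := ⟨n - 1, by omega⟩
    rcases le_total 1 a with h1 | h1
    · have h2 : a ≤ a ^ (m + 1) := by
        rw [pow_succ]
        exact le_mul_of_one_le_left' (one_le_pow_of_one_le' h1 m)
      exact hNconv 1 (one_mem N) (a ^ (m + 1)) hpow.1 a h1 h2
    · have h2 : a ^ (m + 1) ≤ a := by
        rw [pow_succ]
        exact mul_le_of_le_one_left' (pow_le_one' h1 m)
      exact hNconv (a ^ (m + 1)) hpow.1 1 (one_mem N) a h2 h1
  · -- class two
    rw [le_inf_iff]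
    constructor
    · -- `⁅⁅A,A⁆,A⁆ ≤ N`
      have hmapA : Subgroup.map π A = Subgroup.closure ({π x, π y} : Set (G ⧸ N)) := by
        rw [hA, MonoidHom.map_closure, Set.image_insert_eq, Set.image_singleton]
      have hbot : Subgroup.map π ⁅⁅A, A⁆, A⁆ = ⊥ := by
        rw [Subgroup.map_commutator, Subgroup.map_commutator, hmapA, eq_bot_iff]
        refine Subgroup.commutator_le.mpr fun g hg q hq => ?_
        rw [Subgroup.mem_bot, commutatorElement_eq_one_iff_commute]
        exact aux_central_of_commutator_central (π x) (π y) hπcentral g hg q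
      have h2 := (Subgroup.map_eq_bot_iff _).mp hbot
      rwa [hker] at h2
    · -- `⁅⁅A,A⁆,A⁆ ≤ A`
      have hA1 : ⁅A, A⁆ ≤ A := Subgroup.commutator_le.mpr hselfA
      exact Subgroup.commutator_le.mpr fun a ha b hb => hselfA a (hA1 ha) b hb
end

section
/- Let (G,<) be an ordered group possessing a convex jump (B,L) such that both B and L are normal subgroups of G and [L,G] ⊄ B. Then G contains a noncommutative free monoid; more precisely, there exist elements a, b ∈ G with 1 < a and 1 < b such that a and b generate a free monoid of rank 2 in G. -/
set_option linter.unusedSectionVars false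

namespace FM2Aux

variable {G : Type*} [Group G] [LinearOrder G]
  [CovariantClass G G (· * ·) (· < ·)]
  [CovariantClass G G (Function.swap (· * ·)) (· < ·)]

open Pointwise

instance : MulLeftMono G := mulLeftMono_of_mulLeftStrictMono G
instance : MulRightMono G := mulRightMono_of_mulRightStrictMono G

/-- `z` is above every element of `B`. -/
def Pos (B : Subgroup G) (z : G) : Prop := ∀ β ∈ B, β < z

section PosLemmas

variable {B : Subgroup G}

theorem Pos.one_lt {z : G} (hz : Pos B z) : 1 < z := hz 1 B.one_mem

theorem Pos.mul (hBn : B.Normal) {u v : G} (hu : Pos B u) (hv : Pos B v) :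
    Pos B (u * v) := by
  intro β hβ
  have h1 : u⁻¹ * β * u ∈ B := by
    simpa [mul_assoc] using hBn.conj_mem β hβ u⁻¹
  have h2 : u * (u⁻¹ * β * u) < u * v := mul_lt_mul_right (hv _ h1) u
  have h3 : u * (u⁻¹ * β * u) = β * u := by group
  calc β = β * 1 := by group
    _ < β * u := mul_lt_mul_right hu.one_lt β
    _ = u * (u⁻¹ * β * u) := h3.symm
    _ < u * v := h2

theorem Pos.conj (hBn : B.Normal) {z : G} (hz : Pos B z) (h : G) :
    Pos B (h * z * h⁻¹) := by
  intro β hβ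
  have h1 : h⁻¹ * β * h ∈ B := by simpa [mul_assoc] using hBn.conj_mem β hβ h⁻¹
  have h2 := hz _ h1
  have := mul_lt_mul_left (mul_lt_mul_right h2 h) h⁻¹
  calc β = h * (h⁻¹ * β * h) * h⁻¹ := by group
    _ < h * z * h⁻¹ := this

theorem Pos.of_le {u v : G} (hu : Pos B u) (huv : u ≤ v) : Pos B v :=
  fun β hβ => lt_of_lt_of_le (hu β hβ) huv

theorem Pos.B_mul {u : G} {β : G} (hβ : β ∈ B) (hu : Pos B u) : Pos B (β * u) := by
  intro β' hβ'
  have := hu _ (B.mul_mem (B.inv_mem hβ) hβ')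
  calc β' = β * (β⁻¹ * β') := by group
    _ < β * u := mul_lt_mul_right this β

theorem Pos.mul_B {u : G} {β : G} (hu : Pos B u) (hβ : β ∈ B) : Pos B (u * β) := by
  intro β' hβ'
  have := hu _ (B.mul_mem hβ' (B.inv_mem hβ))
  calc β' = (β' * β⁻¹) * β := by group
    _ < u * β := mul_lt_mul_left this β

theorem Pos.not_inv {z : G} (hz : Pos B z) : ¬ Pos B z⁻¹ := by
  intro h
  have h1 := hz.one_lt
  have : z < 1 := by
    have := mul_lt_mul_right h.one_lt z
    simpa using this
  exact absurd h1 (not_lt.mpr this.le)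

theorem not_pos_one : ¬ Pos B (1 : G) := fun h => lt_irrefl 1 h.one_lt

theorem pos_or_mem (hBc : B.IsConvex) {z : G} (h1 : 1 < z) : Pos B z ∨ z ∈ B := by
  by_cases hp : Pos B z
  · exact Or.inl hp
  · right
    simp only [Pos, not_forall] at hp
    obtain ⟨β, hβ, hle⟩ := hp
    exact hBc 1 B.one_mem β hβ z h1.le (not_lt.mp hle)

theorem pos_trichot (hBc : B.IsConvex) (z : G) : Pos B z ∨ Pos B z⁻¹ ∨ z ∈ B := by
  rcases lt_trichotomy 1 z with h | h | h
  · rcases pos_or_mem hBc h with h' | h'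
    · exact Or.inl h'
    · exact Or.inr (Or.inr h')
  · exact Or.inr (Or.inr (h ▸ B.one_mem))
  · have : 1 < z⁻¹ := by
      have := mul_lt_mul_right h z⁻¹
      simpa using this
    rcases pos_or_mem hBc this with h' | h'
    · exact Or.inr (Or.inl h')
    · exact Or.inr (Or.inr (by simpa using B.inv_mem h'))

theorem Pos.pow (hBn : B.Normal) {z : G} (hz : Pos B z) :
    ∀ n : ℕ, n ≠ 0 → Pos B (z ^ n) := by
  intro n hn
  induction n with
  | zero => exact absurd rfl hn
  | succ m ih =>
    rcases Nat.eq_zero_or_pos m with hm | hm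
    · subst hm; simpa using hz
    · have := Pos.mul hBn (ih hm.ne') hz
      simpa [pow_succ] using this

end PosLemmas

end FM2Aux

namespace FM2Aux
open Pointwise

variable {G : Type*} [Group G] [LinearOrder G]
  [CovariantClass G G (· * ·) (· < ·)]
  [CovariantClass G G (Function.swap (· * ·)) (· < ·)]

theorem inv_antitone {a b : G} (h : a ≤ b) : b⁻¹ ≤ a⁻¹ := by
  have h1 := mul_le_mul_left (mul_le_mul_right h b⁻¹) a⁻¹
  calc b⁻¹ = b⁻¹ * a * a⁻¹ := by group
    _ ≤ b⁻¹ * b * a⁻¹ := h1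
    _ = a⁻¹ := by group

/-- Archimedean property of the convex jump. -/
theorem arch {B L : Subgroup G} (hjump : B.IsConvexJump L) (hBn : B.Normal)
    {x y : G} (hxL : x ∈ L) (hx : Pos B x) (hyL : y ∈ L) :
    ∃ n : ℕ, Pos B (y⁻¹ * x ^ n) := by
  obtain ⟨hBc, hLc, hBL, hmax⟩ := hjump
  set S : Subgroup G := B ⊔ Subgroup.zpowers x with hS
  set H : Subgroup G :=
    { carrier := {w : G | ∃ u ∈ S, ∃ v ∈ S, u ≤ w ∧ w ≤ v}
      one_mem' := ⟨1, S.one_mem, 1, S.one_mem, le_rfl, le_rfl⟩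
      mul_mem' := by
        rintro w1 w2 ⟨u1, hu1, v1, hv1, h1, h2⟩ ⟨u2, hu2, v2, hv2, h3, h4⟩
        exact ⟨u1 * u2, S.mul_mem hu1 hu2, v1 * v2, S.mul_mem hv1 hv2,
          mul_le_mul' h1 h3, mul_le_mul' h2 h4⟩
      inv_mem' := by
        rintro w ⟨u, hu, v, hv, h1, h2⟩
        exact ⟨v⁻¹, S.inv_mem hv, u⁻¹, S.inv_mem hu, inv_antitone h2, inv_antitone h1⟩ }
    with hH
  have hHc : H.IsConvex := by
    rintro w1 ⟨u1, hu1, v1, hv1, h1, h2⟩ w2 ⟨u2, hu2, v2, hv2, h3, h4⟩ w hw1 hw2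
    exact ⟨u1, hu1, v2, hv2, le_trans h1 hw1, le_trans hw2 h4⟩
  have hSle : S ≤ L := sup_le hBL.le (Subgroup.zpowers_le.mpr hxL)
  have hBH : B ≤ H := by
    intro b hb
    have hbS : b ∈ S := le_sup_left (a := B) (b := Subgroup.zpowers x) hb
    exact ⟨b, hbS, b, hbS, le_rfl, le_rfl⟩
  have hxS : x ∈ S := le_sup_right (a := B) (b := Subgroup.zpowers x)
    (Subgroup.mem_zpowers x)
  have hxH : x ∈ H := ⟨x, hxS, x, hxS, le_rfl, le_rfl⟩
  have hxB : x ∉ B := fun hxB => lt_irrefl x (hx x hxB)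
  have hHL : H ≤ L := by
    rintro w ⟨u, hu, v, hv, h1, h2⟩
    exact hLc u (hSle hu) v (hSle hv) w h1 h2
  have hBltH : B < H := lt_of_le_of_ne hBH (fun h => hxB (h ▸ hxH))
  have hHeq : H = L := by
    by_contra hne
    exact hmax H hHc ⟨hBltH, lt_of_le_of_ne hHL hne⟩
  -- now y ∈ H
  have hyH : y ∈ H := hHeq ▸ hyL
  obtain ⟨u, hu, v, hv, h1, h2⟩ := hyH
  -- v ∈ B * zpowers x
  have hv' : v ∈ (B : Set G) * (Subgroup.zpowers x : Set G) := by
    rw [← Subgroup.normal_mul]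
    exact hv
  obtain ⟨β, hβ, w, hw, rfl⟩ := hv'
  obtain ⟨m, rfl⟩ := hw
  set n : ℕ := m.toNat + 1 with hn
  refine ⟨n, ?_⟩
  have hkey : Pos B (x ^ (-m) * β⁻¹ * x ^ (n : ℤ)) := by
    have h5 : x ^ (-m) * β⁻¹ * x ^ (n : ℤ) = (x ^ (-m) * β⁻¹ * x ^ m) * x ^ ((n : ℤ) - m) := by
      rw [mul_assoc, mul_assoc, mul_assoc, ← zpow_add]
      ring_nf
    have h6 : x ^ (-m) * β⁻¹ * x ^ m ∈ B := by
      have := hBn.conj_mem β⁻¹ (B.inv_mem hβ) (x ^ (-m))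
      simpa [zpow_neg, mul_assoc] using this
    have h7 : Pos B (x ^ ((n : ℤ) - m)) := by
      have hge : 1 ≤ (n : ℤ) - m := by
        have : m ≤ (m.toNat : ℤ) := Int.self_le_toNat m
        omega
      have hnat : x ^ ((n : ℤ) - m) = x ^ ((n : ℤ) - m).toNat := by
        rw [← zpow_natCast]
        congr 1
        omega
      rw [hnat]
      exact hx.pow hBn _ (by omega)
    rw [h5]
    exact Pos.B_mul h6 h7
  have hle : x ^ (-m) * β⁻¹ * x ^ (n : ℤ) ≤ y⁻¹ * x ^ n := by
    have h8 : y⁻¹ ≥ (β * x ^ m)⁻¹ := inv_antitone h2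
    have h9 : (β * x ^ m)⁻¹ * x ^ (n : ℤ) ≤ y⁻¹ * x ^ (n : ℤ) := mul_le_mul_left h8 _
    calc x ^ (-m) * β⁻¹ * x ^ (n : ℤ) = (β * x ^ m)⁻¹ * x ^ (n : ℤ) := by
          rw [mul_inv_rev, zpow_neg]
      _ ≤ y⁻¹ * x ^ (n : ℤ) := h9
      _ = y⁻¹ * x ^ n := by rw [zpow_natCast]
  exact hkey.of_le hle

end FM2Aux

namespace FM2Aux

variable {G : Type*} [Group G] [LinearOrder G]
  [CovariantClass G G (· * ·) (· < ·)]
  [CovariantClass G G (Function.swap (· * ·)) (· < ·)]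

/-- strict order modulo `B` -/
def LTb (B : Subgroup G) (x y : G) : Prop := Pos B (x⁻¹ * y)

/-- weak order modulo `B` -/
def LEb (B : Subgroup G) (x y : G) : Prop := x⁻¹ * y ∈ B ∨ Pos B (x⁻¹ * y)

section OrdLemmas

variable {B : Subgroup G} (hBn : B.Normal)

theorem LEb.refl (x : G) : LEb B x x := Or.inl (by simpa using B.one_mem)

theorem LTb.leb {x y : G} (h : LTb B x y) : LEb B x y := Or.inr h

theorem LTb.lt {x y : G} (h : LTb B x y) : x < y := by
  have h1 : 1 < x⁻¹ * y := h.one_lt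
  have := mul_lt_mul_right h1 x
  simpa using this

include hBn

theorem LTb.trans {x y z : G} (h1 : LTb B x y) (h2 : LTb B y z) : LTb B x z := by
  have := h1.mul hBn h2
  unfold LTb
  have e : (x⁻¹ * y) * (y⁻¹ * z) = x⁻¹ * z := by group
  rwa [e] at this

theorem LEb.trans_ltb {x y z : G} (h1 : LEb B x y) (h2 : LTb B y z) : LTb B x z := by
  have e : (x⁻¹ * y) * (y⁻¹ * z) = x⁻¹ * z := by group
  rcases h1 with h1 | h1
  · have := Pos.B_mul h1 h2
    unfold LTb; rwa [e] at this
  · have := h1.mul hBn h2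
    unfold LTb; rwa [e] at this

theorem LTb.trans_leb {x y z : G} (h1 : LTb B x y) (h2 : LEb B y z) : LTb B x z := by
  have e : (x⁻¹ * y) * (y⁻¹ * z) = x⁻¹ * z := by group
  rcases h2 with h2 | h2
  · have := Pos.mul_B h1 h2
    unfold LTb; rwa [e] at this
  · have := h1.mul hBn h2
    unfold LTb; rwa [e] at this

theorem LEb.trans' {x y z : G} (h1 : LEb B x y) (h2 : LEb B y z) : LEb B x z := by
  rcases h2 with h2 | h2
  · have e : x⁻¹ * z = (x⁻¹ * y) * (y⁻¹ * z) := by group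
    rcases h1 with h1 | h1
    · exact Or.inl (by rw [e]; exact B.mul_mem h1 h2)
    · exact Or.inr (by rw [e]; exact h1.mul_B h2)
  · exact (h1.trans_ltb hBn h2).leb

omit hBn

theorem LTb.mul_left {x y : G} (h : LTb B x y) (z : G) : LTb B (z * x) (z * y) := by
  unfold LTb at *
  have e : (z * x)⁻¹ * (z * y) = x⁻¹ * y := by group
  rwa [e]

theorem LEb.mul_left {x y : G} (h : LEb B x y) (z : G) : LEb B (z * x) (z * y) := by
  unfold LEb at *
  have e : (z * x)⁻¹ * (z * y) = x⁻¹ * y := by group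
  rwa [e]

include hBn

theorem LTb.mul_right {x y : G} (h : LTb B x y) (z : G) : LTb B (x * z) (y * z) := by
  unfold LTb at *
  have e : (x * z)⁻¹ * (y * z) = z⁻¹ * (x⁻¹ * y) * z := by group
  rw [e]
  exact h.conj hBn z⁻¹ |>.of_le (by rw [inv_inv])

theorem LEb.mul_right {x y : G} (h : LEb B x y) (z : G) : LEb B (x * z) (y * z) := by
  have e : (x * z)⁻¹ * (y * z) = z⁻¹ * (x⁻¹ * y) * z := by group
  rcases h with h | h
  · exact Or.inl (by rw [e]; simpa [mul_assoc] using hBn.conj_mem _ h z⁻¹)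
  · exact Or.inr (by rw [e]; have := h.conj hBn z⁻¹; rwa [inv_inv] at this)

theorem LTb.mul_ltb {a b c d : G} (h1 : LTb B a b) (h2 : LTb B c d) :
    LTb B (a * c) (b * d) := (h2.mul_left a).trans hBn (h1.mul_right hBn d)

theorem LEb.mul_leb {a b c d : G} (h1 : LEb B a b) (h2 : LEb B c d) :
    LEb B (a * c) (b * d) := (h2.mul_left a).trans' hBn (h1.mul_right hBn d)

theorem LTb.pow {x y : G} (h : LTb B x y) : ∀ n : ℕ, n ≠ 0 → LTb B (x ^ n) (y ^ n) := by
  intro n hn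
  induction n with
  | zero => exact absurd rfl hn
  | succ m ih =>
    rcases Nat.eq_zero_or_pos m with hm | hm
    · subst hm; simpa using h
    · have := (ih hm.ne').mul_ltb hBn h
      rw [← pow_succ, ← pow_succ] at this
      exact this

theorem LEb.pow {x y : G} (h : LEb B x y) : ∀ n : ℕ, LEb B (x ^ n) (y ^ n) := by
  intro n
  induction n with
  | zero => simpa using LEb.refl 1
  | succ m ih =>
    have := ih.mul_leb hBn h
    rw [← pow_succ, ← pow_succ] at this
    exact this

omit hBn

theorem LTb.conjb {x y : G} (h : LTb B x y) (hBn : B.Normal) (g : G) :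
    LTb B (g * x * g⁻¹) (g * y * g⁻¹) := by
  unfold LTb at *
  have e : (g * x * g⁻¹)⁻¹ * (g * y * g⁻¹) = g * (x⁻¹ * y) * g⁻¹ := by group
  rw [e]
  exact h.conj hBn g

theorem LEb.conjb {x y : G} (h : LEb B x y) (hBn : B.Normal) (g : G) :
    LEb B (g * x * g⁻¹) (g * y * g⁻¹) := by
  have e : (g * x * g⁻¹)⁻¹ * (g * y * g⁻¹) = g * (x⁻¹ * y) * g⁻¹ := by group
  rcases h with h | h
  · exact Or.inl (by rw [e]; exact hBn.conj_mem _ h g)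
  · exact Or.inr (by rw [e]; exact h.conj hBn g)

theorem not_leb (hBc : B.IsConvex) {x y : G} (h : ¬ LEb B x y) : LTb B y x := by
  rcases pos_trichot hBc (x⁻¹ * y) with h' | h' | h'
  · exact absurd (Or.inr h') h
  · unfold LTb
    have e : (x⁻¹ * y)⁻¹ = y⁻¹ * x := by group
    rwa [e] at h'
  · exact absurd (Or.inl h') h

theorem LTb.not_ltb {x y : G} (h : LTb B x y) : ¬ LTb B y x := by
  intro h'
  unfold LTb at h h'
  have e : (y⁻¹ * x) = (x⁻¹ * y)⁻¹ := by group
  rw [e] at h'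
  exact h.not_inv h'

theorem LTb.inv {x y : G} (h : LTb B x y) (hBn : B.Normal) : LTb B y⁻¹ x⁻¹ := by
  unfold LTb at *
  have e : (y⁻¹)⁻¹ * x⁻¹ = y * (x⁻¹ * y) * y⁻¹ := by group
  rw [e]
  exact h.conj hBn y

theorem one_ltb_iff {x : G} : LTb B 1 x ↔ Pos B x := by
  unfold LTb
  simp

end OrdLemmas

end FM2Aux

namespace FM2Aux

variable {G : Type*} [Group G] [LinearOrder G]
  [CovariantClass G G (· * ·) (· < ·)]
  [CovariantClass G G (Function.swap (· * ·)) (· < ·)]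

/-- conjugation by `g ^ k` -/
def cg (g : G) (k : ℕ) (x : G) : G := g ^ k * x * (g ^ k)⁻¹

section CgLemmas

variable {B : Subgroup G} {g : G}

@[simp] theorem cg_zero (x : G) : cg g 0 x = x := by simp [cg]

theorem cg_succ (k : ℕ) (x : G) : cg g (k + 1) x = cg g k (cg g 1 x) := by
  simp only [cg, pow_succ, pow_one]
  group

theorem cg_succ' (k : ℕ) (x : G) : cg g (k + 1) x = cg g 1 (cg g k x) := by
  simp only [cg, pow_succ, pow_one]
  group

theorem cg_one (x : G) : cg g 1 x = g * x * g⁻¹ := by simp [cg]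

theorem cg_mul (k : ℕ) (x y : G) : cg g k (x * y) = cg g k x * cg g k y := by
  simp only [cg]; group

theorem cg_pow (k : ℕ) (x : G) (n : ℕ) : cg g k (x ^ n) = (cg g k x) ^ n := by
  simp only [cg, conj_pow]

theorem cg_inv (k : ℕ) (x : G) : cg g k x⁻¹ = (cg g k x)⁻¹ := by
  simp only [cg]; group

theorem Pos.cg (hBn : B.Normal) {x : G} (h : Pos B x) (k : ℕ) : Pos B (cg g k x) :=
  h.conj hBn (g ^ k)

theorem LTb.cg (hBn : B.Normal) {x y : G} (h : LTb B x y) (k : ℕ) :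
    LTb B (cg g k x) (cg g k y) := h.conjb hBn (g ^ k)

theorem LEb.cg (hBn : B.Normal) {x y : G} (h : LEb B x y) (k : ℕ) :
    LEb B (cg g k x) (cg g k y) := h.conjb hBn (g ^ k)

theorem cg_mem {L : Subgroup G} (hLn : L.Normal) {x : G} (hx : x ∈ L) (k : ℕ) :
    cg g k x ∈ L := hLn.conj_mem x hx (g ^ k)

theorem cg_one_lt {x : G} (h : 1 < x) (k : ℕ) : 1 < cg g k x := by
  have h1 : g ^ k * 1 * (g ^ k)⁻¹ < g ^ k * x * (g ^ k)⁻¹ :=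
    mul_lt_mul_left (mul_lt_mul_right h (g ^ k)) _
  rw [mul_one, mul_inv_cancel] at h1
  exact h1

end CgLemmas

section Inc

variable {B L : Subgroup G}

/-- increments of a strictly contracting positive element strictly contract -/
theorem inc (hjump : B.IsConvexJump L) (hBn : B.Normal) (hLn : L.Normal)
    {g f : G} (hfP : Pos B f) (hfL : f ∈ L)
    (hstep : LTb B (cg g 1 f) f) :
    LTb B (cg g 1 ((cg g 1 f)⁻¹ * f)) ((cg g 1 f)⁻¹ * f) := by
  set r : G := (cg g 1 f)⁻¹ * f with hr
  have hrP : Pos B r := hstep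
  have hrL : r ∈ L := L.mul_mem (L.inv_mem (cg_mem hLn hfL 1)) hfL
  by_contra hcon
  have hBc : B.IsConvex := hjump.1
  have hup : LEb B r (cg g 1 r) := by
    rcases pos_trichot hBc ((cg g 1 r)⁻¹ * r) with h' | h' | h'
    · exact absurd h' hcon
    · refine Or.inr ?_
      have e : ((cg g 1 r)⁻¹ * r)⁻¹ = r⁻¹ * cg g 1 r := by group
      rwa [e] at h'
    · refine Or.inl ?_
      have h'' : (((cg g 1 r)⁻¹ * r))⁻¹ ∈ B := B.inv_mem h'
      have e : ((cg g 1 r)⁻¹ * r)⁻¹ = r⁻¹ * cg g 1 r := by group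
      rwa [e] at h''
  have hupk : ∀ k : ℕ, LEb B r (cg g k r) := by
    intro k
    induction k with
    | zero => simpa using LEb.refl r
    | succ m ih =>
      have h1 : LEb B (cg g 1 r) (cg g (m + 1) r) := by
        have := ih.cg hBn (g := g) 1
        rwa [← cg_succ'] at this
      exact hup.trans' hBn h1
  have claim : ∀ k : ℕ, LEb B (cg g k f * r ^ k) f := by
    intro k
    induction k with
    | zero => simpa using LEb.refl f
    | succ m ih =>
      have e1 : cg g (m + 1) f * r ^ (m + 1) = cg g (m + 1) f * r * r ^ m := by
        rw [pow_succ']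
        group
      have h1 : LEb B (cg g (m + 1) f * r * r ^ m) (cg g (m + 1) f * cg g m r * r ^ m) :=
        (((hupk m).mul_left (cg g (m + 1) f)).mul_right hBn (r ^ m))
      have e2 : cg g (m + 1) f * cg g m r = cg g m f := by
        rw [cg_succ, ← cg_mul]
        congr 1
        rw [hr]
        group
      rw [e1]
      refine h1.trans' hBn ?_
      rw [e2]
      exact ih
  have hpow : ∀ k : ℕ, LEb B (r ^ k) f := by
    intro k
    have h1 : LEb B (1 : G) (cg g k f) := (one_ltb_iff.mpr (hfP.cg hBn k)).leb
    have h2 : LEb B (1 * r ^ k) (cg g k f * r ^ k) := h1.mul_right hBn (r ^ k)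
    rw [one_mul] at h2
    exact h2.trans' hBn (claim k)
  obtain ⟨n, hn⟩ := arch hjump hBn hrL hrP hfL
  have h3 : LTb B f (r ^ n) := hn
  have h4 : LTb B f f := h3.trans_leb hBn (hpow n)
  have : Pos B (1 : G) := by
    have e : f⁻¹ * f = 1 := by group
    unfold LTb at h4
    rwa [e] at h4
  exact not_pos_one this

end Inc

end FM2Aux

namespace FM2Aux

variable {G : Type*} [Group G] [LinearOrder G]
  [CovariantClass G G (· * ·) (· < ·)]
  [CovariantClass G G (Function.swap (· * ·)) (· < ·)]

section Key

variable {B L : Subgroup G}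

/-- Main lemma: from a strict one-step contraction, find a strong (doubling) contraction. -/
theorem key (hjump : B.IsConvexJump L) (hBn : B.Normal) (hLn : L.Normal)
    {g f : G} (hfP : Pos B f) (hfL : f ∈ L)
    (hstep : LTb B (cg g 1 f) f) :
    ∃ K : ℕ, K ≠ 0 ∧ (cg g K f) ^ 2 < f := by
  have hBc : B.IsConvex := hjump.1
  set r : G := (cg g 1 f)⁻¹ * f with hr
  have hrP : Pos B r := hstep
  have hrL : r ∈ L := L.mul_mem (L.inv_mem (cg_mem hLn hfL 1)) hfL
  have hrstep : LTb B (cg g 1 r) r := inc hjump hBn hLn hfP hfL hstep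
  set s : G := (cg g 1 r)⁻¹ * r with hs
  have hsP : Pos B s := hrstep
  have hsL : s ∈ L := L.mul_mem (L.inv_mem (cg_mem hLn hrL 1)) hrL
  have hsstep : LTb B (cg g 1 s) s := inc hjump hBn hLn hrP hrL hrstep
  -- step contraction iterated
  have hfdec : ∀ k : ℕ, LTb B (cg g (k + 1) f) (cg g k f) := by
    intro k
    have := hstep.cg hBn (g := g) k
    rwa [← cg_succ] at this
  have hsdec : ∀ k : ℕ, LTb B (cg g (k + 1) s) (cg g k s) := by
    intro k
    have := hsstep.cg hBn (g := g) k
    rwa [← cg_succ] at this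
  -- main existence
  have main : ∃ k : ℕ, LEb B (cg g k f) r := by
    by_contra hcontra
    push_neg at hcontra
    have hgt : ∀ k : ℕ, LTb B r (cg g k f) := fun k => not_leb hBc (hcontra k)
    -- archimedean bounds
    obtain ⟨M, hM⟩ := arch hjump hBn hrL hrP hfL
    have hM' : LTb B f (r ^ M) := hM
    have hMne : M ≠ 0 := by
      rintro rfl
      rw [pow_zero] at hM'
      exact (hM'.trans hBn (one_ltb_iff.mpr hfP)).not_ltb (hM'.trans hBn (one_ltb_iff.mpr hfP))
    obtain ⟨T, hT⟩ := arch hjump hBn hsL hsP hrL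
    have hT' : LTb B r (s ^ T) := hT
    have hTne : T ≠ 0 := by
      rintro rfl
      rw [pow_zero] at hT'
      exact (hT'.trans hBn (one_ltb_iff.mpr hrP)).not_ltb (hT'.trans hBn (one_ltb_iff.mpr hrP))
    have hfr : ∀ k : ℕ, LTb B (cg g k f) ((cg g k r) ^ M) := by
      intro k
      have := hM'.cg hBn (g := g) k
      rwa [cg_pow] at this
    have hrs : ∀ k : ℕ, LTb B (cg g k r) ((cg g k s) ^ T) := by
      intro k
      have := hT'.cg hBn (g := g) k
      rwa [cg_pow] at this
    have hrC : ∀ k : ℕ, LTb B r ((cg g k s) ^ (T * M)) := by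
      intro k
      have h1 : LTb B r ((cg g k r) ^ M) := (hgt k).trans hBn (hfr k)
      have h2 : LTb B ((cg g k r) ^ M) (((cg g k s) ^ T) ^ M) :=
        (hrs k).pow hBn M hMne
      have h3 := h1.trans hBn h2
      rwa [← pow_mul] at h3
    have claim2 : ∀ k : ℕ, LEb B (cg g (k + 1) r * (cg g k s) ^ (k + 1)) r := by
      intro k
      induction k with
      | zero =>
        have e : cg g 1 r * (cg g 0 s) ^ 1 = r := by
          rw [cg_zero, pow_one, hs]
          group
        rw [e]
        exact LEb.refl r
      | succ m ih =>
        have e1 : cg g (m + 2) r * (cg g (m + 1) s) ^ (m + 2)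
            = cg g (m + 2) r * cg g (m + 1) s * (cg g (m + 1) s) ^ (m + 1) := by
          rw [pow_succ']
          group
        have h1 : LEb B ((cg g (m + 1) s) ^ (m + 1)) ((cg g m s) ^ (m + 1)) :=
          ((hsdec m).leb).pow hBn (m + 1)
        have h2 : LEb B (cg g (m + 2) r * cg g (m + 1) s * (cg g (m + 1) s) ^ (m + 1))
            (cg g (m + 2) r * cg g (m + 1) s * (cg g m s) ^ (m + 1)) :=
          h1.mul_left _
        have e2 : cg g (m + 2) r * cg g (m + 1) s = cg g (m + 1) r := by
          rw [show m + 2 = (m + 1) + 1 from rfl, cg_succ, ← cg_mul]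
          congr 1
          rw [hs]
          group
        rw [e1]
        refine h2.trans' hBn ?_
        rw [e2]
        exact ih
    have claim2' : ∀ k : ℕ, LEb B ((cg g k s) ^ (k + 1)) r := by
      intro k
      have h1 : LEb B (1 : G) (cg g (k + 1) r) := (one_ltb_iff.mpr (hrP.cg hBn _)).leb
      have h2 := h1.mul_right hBn ((cg g k s) ^ (k + 1))
      rw [one_mul] at h2
      exact h2.trans' hBn (claim2 k)
    set C : ℕ := T * M with hC
    have h1 : LEb B ((cg g C s) ^ (C + 1)) r := claim2' C
    have h2 : LTb B r ((cg g C s) ^ C) := hrC C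
    have h3 : LTb B ((cg g C s) ^ (C + 1)) ((cg g C s) ^ C) := h1.trans_ltb hBn h2
    set σ : G := cg g C s with hσ
    have h4 : Pos B σ⁻¹ := by
      unfold LTb at h3
      have e : (σ ^ (C + 1))⁻¹ * σ ^ C = σ⁻¹ := by
        rw [pow_succ, mul_inv_rev, mul_assoc, inv_mul_cancel, mul_one]
      rwa [e] at h3
    exact (hsP.cg hBn C).not_inv h4
  obtain ⟨k, hk⟩ := main
  have hKr : LTb B (cg g (k + 1) f) r := (hfdec k).trans_leb hBn hk
  have claim3 : ∀ j : ℕ, LEb B (cg g (j + 1) f * r) f := by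
    intro j
    induction j with
    | zero =>
      have e : cg g 1 f * r = f := by rw [hr]; group
      rw [e]
      exact LEb.refl f
    | succ m ih =>
      have h1 : LEb B (cg g (m + 2) f * r) (cg g (m + 1) f * r) :=
        ((hfdec (m + 1)).leb).mul_right hBn r
      exact h1.trans' hBn ih
  have hfinal : LTb B (cg g (k + 1) f * cg g (k + 1) f) (cg g (k + 1) f * r) :=
    hKr.mul_left _
  have hfinal2 : LTb B (cg g (k + 1) f * cg g (k + 1) f) f :=
    hfinal.trans_leb hBn (claim3 k)
  refine ⟨k + 1, Nat.succ_ne_zero k, ?_⟩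
  rw [sq]
  exact hfinal2.lt

end Key

end FM2Aux

namespace FM2Aux

theorem nat_two_mul_le_two_pow : ∀ m : ℕ, 2 * m ≤ 2 ^ m := by
  intro m
  induction m with
  | zero => simp
  | succ n ih =>
    rcases Nat.eq_zero_or_pos n with hn | hn
    · subst hn; simp
    · have h2 : 2 ≤ 2 ^ n := by
        calc 2 = 2 ^ 1 := (pow_one 2).symm
          _ ≤ 2 ^ n := Nat.pow_le_pow_right (by norm_num) hn
      calc 2 * (n + 1) = 2 * n + 2 := by ring
        _ ≤ 2 ^ n + 2 ^ n := Nat.add_le_add ih h2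
        _ = 2 ^ (n + 1) := by rw [pow_succ]; ring

theorem nat_exists_big (t : ℕ) : ∃ k : ℕ, k ≠ 0 ∧ 2 * t * k + 1 < 2 ^ k := by
  set m : ℕ := 2 * t + 1 with hm
  refine ⟨2 ^ m, (Nat.pow_pos (by norm_num : 0 < 2)).ne', ?_⟩
  have h1 : 2 * t * 2 ^ m + 1 ≤ m * 2 ^ m := by
    have : 1 ≤ 2 ^ m := Nat.one_le_two_pow
    calc 2 * t * 2 ^ m + 1 ≤ 2 * t * 2 ^ m + 2 ^ m := by omega
      _ = m * 2 ^ m := by rw [hm]; ring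
  have h2 : m * 2 ^ m < 2 ^ m * 2 ^ m := by
    exact (Nat.mul_lt_mul_right (Nat.pow_pos (by norm_num : 0 < 2))).mpr (Nat.lt_two_pow_self (n := m))
  have h3 : (2 : ℕ) ^ m * 2 ^ m = 2 ^ (2 * m) := by
    rw [← pow_add]; ring_nf
  have h4 : (2 : ℕ) ^ (2 * m) ≤ 2 ^ (2 ^ m) :=
    Nat.pow_le_pow_right (by norm_num) (nat_two_mul_le_two_pow m)
  omega
  
variable {G : Type*} [Group G] [LinearOrder G]
  [CovariantClass G G (· * ·) (· < ·)]
  [CovariantClass G G (Function.swap (· * ·)) (· < ·)]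

section NoDom

variable {B L : Subgroup G}

/-- No element of `L` can conjugate a positive `a ∈ L \ B` below its square root. -/
theorem noDom (hjump : B.IsConvexJump L) (hBn : B.Normal)
    {a ℓ : G} (haL : a ∈ L) (haP : Pos B a) (hℓL : ℓ ∈ L)
    (h : (ℓ * a * ℓ⁻¹) ^ 2 < a) : False := by
  have ha1 : 1 < a := haP.one_lt
  obtain ⟨t1, ht1⟩ := arch hjump hBn haL haP hℓL
  obtain ⟨t2, ht2⟩ := arch hjump hBn haL haP (L.inv_mem hℓL)
  set t : ℕ := t1 + t2 + 1 with ht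
  have hℓa : ℓ < a ^ t := by
    have h1 : ℓ < a ^ t1 := (LTb.lt ht1)
    calc ℓ < a ^ t1 := h1
      _ ≤ a ^ t := pow_le_pow_right' ha1.le (by omega)
  have hℓa' : ℓ⁻¹ < a ^ t := by
    have h1 : ℓ⁻¹ < a ^ t2 := (LTb.lt ht2)
    calc ℓ⁻¹ < a ^ t2 := h1
      _ ≤ a ^ t := pow_le_pow_right' ha1.le (by omega)
  -- the contraction chain
  have hchain : ∀ k : ℕ, k ≠ 0 → (ℓ ^ k * a * (ℓ ^ k)⁻¹) ^ (2 ^ k) < a := by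
    intro k hk
    induction k with
    | zero => exact absurd rfl hk
    | succ m ih =>
      rcases Nat.eq_zero_or_pos m with hm | hm
      · subst hm
        simpa using h
      · have ihm := ih hm.ne'
        have hconj : (ℓ ^ (m + 1) * a * (ℓ ^ (m + 1))⁻¹) ^ 2 < ℓ ^ m * a * (ℓ ^ m)⁻¹ := by
          have h1 : ℓ ^ m * (ℓ * a * ℓ⁻¹) ^ 2 * (ℓ ^ m)⁻¹ < ℓ ^ m * a * (ℓ ^ m)⁻¹ :=
            mul_lt_mul_left (mul_lt_mul_right h (ℓ ^ m)) _
          have e : ℓ ^ m * (ℓ * a * ℓ⁻¹) ^ 2 * (ℓ ^ m)⁻¹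
              = (ℓ ^ (m + 1) * a * (ℓ ^ (m + 1))⁻¹) ^ 2 := by
            rw [← conj_pow]
            congr 1
            rw [pow_succ]
            group
          rwa [e] at h1
        have hlt : 1 < ℓ ^ m * a * (ℓ ^ m)⁻¹ := by
          have h1 : ℓ ^ m * 1 * (ℓ ^ m)⁻¹ < ℓ ^ m * a * (ℓ ^ m)⁻¹ :=
            mul_lt_mul_left (mul_lt_mul_right ha1 _) _
          rwa [mul_one, mul_inv_cancel] at h1
        calc (ℓ ^ (m + 1) * a * (ℓ ^ (m + 1))⁻¹) ^ 2 ^ (m + 1)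
            = ((ℓ ^ (m + 1) * a * (ℓ ^ (m + 1))⁻¹) ^ 2) ^ 2 ^ m := by
              rw [← pow_mul]
              congr 1
              rw [pow_succ]
              ring
          _ < (ℓ ^ m * a * (ℓ ^ m)⁻¹) ^ 2 ^ m :=
              pow_lt_pow_left' (Nat.pow_pos (by norm_num : 0 < 2)).ne' hconj
          _ < a := ihm
  obtain ⟨k, hk0, hkbig⟩ := nat_exists_big t
  have h5 := hchain k hk0
  have h6 : ℓ ^ k * a ^ (2 ^ k) * (ℓ ^ k)⁻¹ < a := by
    rwa [conj_pow] at h5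
  have h7 : a ^ (2 ^ k) < (ℓ ^ k)⁻¹ * a * ℓ ^ k := by
    have := mul_lt_mul_left (mul_lt_mul_right h6 (ℓ ^ k)⁻¹) (ℓ ^ k)
    have e : (ℓ ^ k)⁻¹ * (ℓ ^ k * a ^ 2 ^ k * (ℓ ^ k)⁻¹) * ℓ ^ k = a ^ 2 ^ k := by group
    rwa [e] at this
  have h8 : (ℓ ^ k)⁻¹ * a * ℓ ^ k < a ^ (2 * t * k + 1) := by
    have hℓk : ℓ ^ k < a ^ (t * k) := by
      have := pow_lt_pow_left' hk0 hℓa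
      rwa [← pow_mul] at this
    have hℓk' : (ℓ ^ k)⁻¹ < a ^ (t * k) := by
      have := pow_lt_pow_left' hk0 hℓa'
      rw [← pow_mul] at this
      rwa [inv_pow] at this
    calc (ℓ ^ k)⁻¹ * a * ℓ ^ k < (ℓ ^ k)⁻¹ * a * a ^ (t * k) :=
          mul_lt_mul_right hℓk _
      _ < a ^ (t * k) * a * a ^ (t * k) :=
          mul_lt_mul_left (mul_lt_mul_left hℓk' a) _
      _ = a ^ (2 * t * k + 1) := by
          rw [← pow_succ, ← pow_add]
          congr 1
          ring
  have h9 : a ^ (2 ^ k) < a ^ (2 * t * k + 1) := h7.trans h8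
  have h10 : 2 ^ k < 2 * t * k + 1 := by
    by_contra hcc
    exact absurd (pow_le_pow_right' ha1.le (not_lt.mp hcc)) (not_le.mpr h9)
  omega

end NoDom

end FM2Aux

namespace FM2Aux

/-- digit product: `digits c l j` multiplies `c (j+i)` over positions `i` of `l` holding `1`. -/
def digits {G : Type*} [Monoid G] (c : ℕ → G) : List (Fin 2) → ℕ → G
  | [], _ => 1
  | i :: l, j => (if i = (0 : Fin 2) then 1 else c j) * digits c l (j + 1)

/-- `dprod c j k = c j * c (j+1) * ⋯ * c (j+k-1)`. -/
def dprod {G : Type*} [Monoid G] (c : ℕ → G) (j : ℕ) : ℕ → G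
  | 0 => 1
  | k + 1 => dprod c j k * c (j + k)

theorem digits_nil {G : Type*} [Monoid G] (c : ℕ → G) (j : ℕ) : digits c [] j = 1 := rfl

theorem digits_cons_zero {G : Type*} [Monoid G] (c : ℕ → G) (l : List (Fin 2)) (j : ℕ) :
    digits c ((0 : Fin 2) :: l) j = digits c l (j + 1) := by
  simp [digits]

theorem digits_cons_one {G : Type*} [Monoid G] (c : ℕ → G) (l : List (Fin 2)) (j : ℕ) :
    digits c ((1 : Fin 2) :: l) j = c j * digits c l (j + 1) := by
  simp [digits]

theorem fin2_cases : ∀ i : Fin 2, i = 0 ∨ i = 1 := by decide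

variable {G : Type*} [Group G] [LinearOrder G]
  [CovariantClass G G (· * ·) (· < ·)]
  [CovariantClass G G (Function.swap (· * ·)) (· < ·)]

section Digits

variable {L : Subgroup G} {c : ℕ → G}

theorem digits_one_le (hc : ∀ j, 1 < c j) : ∀ (l : List (Fin 2)) (j : ℕ), 1 ≤ digits c l j := by
  intro l
  induction l with
  | nil => intro j; exact le_refl 1
  | cons i l ih =>
    intro j
    rcases fin2_cases i with h | h <;> subst h
    · rw [digits_cons_zero]; exact ih (j + 1)
    · rw [digits_cons_one]
      exact le_trans (hc j).le (le_mul_of_one_le_right' (ih (j + 1)))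

theorem digits_mem (hcL : ∀ j, c j ∈ L) : ∀ (l : List (Fin 2)) (j : ℕ), digits c l j ∈ L := by
  intro l
  induction l with
  | nil => intro j; exact L.one_mem
  | cons i l ih =>
    intro j
    rcases fin2_cases i with h | h <;> subst h
    · rw [digits_cons_zero]; exact ih (j + 1)
    · rw [digits_cons_one]; exact L.mul_mem (hcL j) (ih (j + 1))

/-- decreasing case upper bound. -/
theorem digits_lt_of_contract (hc : ∀ j, 1 < c j) (hsq : ∀ j, (c (j + 1)) ^ 2 < c j) :
    ∀ (l : List (Fin 2)) (j : ℕ), digits c l (j + 1) < c j := by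
  intro l
  induction l with
  | nil =>
    intro j
    rw [digits_nil]
    exact hc j
  | cons i l ih =>
    intro j
    have ih1 : digits c l (j + 2) < c (j + 1) := ih (j + 1)
    have hsqj : c (j + 1) * c (j + 1) < c j := by rw [← sq]; exact hsq j
    rcases fin2_cases i with h | h <;> subst h
    · rw [digits_cons_zero]
      calc digits c l (j + 1 + 1) < c (j + 1) := ih1
        _ ≤ c (j + 1) * c (j + 1) := le_mul_of_one_le_right' (hc _).le
        _ < c j := hsqj
    · rw [digits_cons_one]
      calc c (j + 1) * digits c l (j + 1 + 1) < c (j + 1) * c (j + 1) := mul_lt_mul_right ih1 _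
        _ < c j := hsqj

theorem digits_inj_of_contract (hc : ∀ j, 1 < c j) (hsq : ∀ j, (c (j + 1)) ^ 2 < c j) :
    ∀ (l₁ l₂ : List (Fin 2)) (j : ℕ), l₁.length = l₂.length →
      digits c l₁ j = digits c l₂ j → l₁ = l₂ := by
  intro l₁
  induction l₁ with
  | nil =>
    intro l₂ j hlen _
    exact ((List.length_eq_zero_iff.mp hlen.symm) ▸ rfl)
  | cons i₁ l₁ ih =>
    intro l₂ j hlen heq
    match l₂ with
    | [] => exact absurd hlen (by simp)
    | i₂ :: l₂ =>
      have hlen' : l₁.length = l₂.length := by simpa using hlen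
      have key : ∀ (u v : List (Fin 2)),
          c j * digits c u (j + 1) = digits c v (j + 1) → False := by
        intro u v he
        have h1 : c j ≤ c j * digits c u (j + 1) :=
          le_mul_of_one_le_right' (digits_one_le hc u (j + 1))
        have h2 : digits c v (j + 1) < c j := digits_lt_of_contract hc hsq v j
        rw [he] at h1
        exact absurd h1 (not_le.mpr h2)
      rcases fin2_cases i₁ with h₁ | h₁ <;> rcases fin2_cases i₂ with h₂ | h₂ <;>
        subst h₁ <;> subst h₂
      · rw [digits_cons_zero, digits_cons_zero] at heq
        rw [ih l₂ (j + 1) hlen' heq]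
      · rw [digits_cons_zero, digits_cons_one] at heq
        exact absurd heq.symm (key l₂ l₁)
      · rw [digits_cons_one, digits_cons_zero] at heq
        exact absurd heq (key l₁ l₂)
      · rw [digits_cons_one, digits_cons_one] at heq
        rw [ih l₂ (j + 1) hlen' (mul_left_cancel heq)]

end Digits

end FM2Aux

namespace FM2Aux

variable {G : Type*} [Group G] [LinearOrder G]
  [CovariantClass G G (· * ·) (· < ·)]
  [CovariantClass G G (Function.swap (· * ·)) (· < ·)]

section DigitsExpand

variable {c : ℕ → G}

theorem dprod_left (c : ℕ → G) (j : ℕ) :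
    ∀ k : ℕ, dprod c j (k + 1) = c j * dprod c (j + 1) k := by
  intro k
  induction k with
  | zero => simp [dprod]
  | succ m ih =>
    show dprod c j (m + 1) * c (j + (m + 1)) = c j * dprod c (j + 1) (m + 1)
    rw [ih]
    show c j * dprod c (j + 1) m * c (j + (m + 1)) = c j * (dprod c (j + 1) m * c (j + 1 + m))
    have e : j + 1 + m = j + (m + 1) := by omega
    rw [e, mul_assoc]

theorem dprod_lt_of_expand (hc : ∀ j, 1 < c j) (hsq : ∀ j, (c j) ^ 2 < c (j + 1)) :
    ∀ (k j : ℕ), dprod c j k < c (j + k) := by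
  intro k
  induction k with
  | zero =>
    intro j
    show (1 : G) < c (j + 0)
    exact hc _
  | succ m ih =>
    intro j
    show dprod c j m * c (j + m) < c (j + (m + 1))
    calc dprod c j m * c (j + m) < c (j + m) * c (j + m) := mul_lt_mul_left (ih j) _
      _ = (c (j + m)) ^ 2 := (sq _).symm
      _ < c (j + m + 1) := hsq _
      _ = c (j + (m + 1)) := rfl

theorem digits_le_dprod (hc : ∀ j, 1 < c j) :
    ∀ (l : List (Fin 2)) (j : ℕ), digits c l j ≤ dprod c j l.length := by
  intro l
  induction l with
  | nil => intro j; exact le_refl 1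
  | cons i l ih =>
    intro j
    have h2 : dprod c j (l.length + 1) = c j * dprod c (j + 1) l.length := dprod_left c j _
    rcases fin2_cases i with h | h <;> subst h
    · rw [digits_cons_zero]
      show digits c l (j + 1) ≤ dprod c j (l.length + 1)
      rw [h2]
      exact le_trans (ih (j + 1)) (le_mul_of_one_le_left' (hc j).le)
    · rw [digits_cons_one]
      show c j * digits c l (j + 1) ≤ dprod c j (l.length + 1)
      rw [h2]
      exact mul_le_mul_right (ih (j + 1)) _

theorem digits_lt_of_expand (hc : ∀ j, 1 < c j) (hsq : ∀ j, (c j) ^ 2 < c (j + 1)) :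
    ∀ (l : List (Fin 2)) (j : ℕ), digits c l j < c (j + l.length) :=
  fun l j => lt_of_le_of_lt (digits_le_dprod hc l j) (dprod_lt_of_expand hc hsq l.length j)

theorem digits_append (c : ℕ → G) (i : Fin 2) :
    ∀ (l : List (Fin 2)) (j : ℕ),
      digits c (l ++ [i]) j
        = digits c l j * (if i = (0 : Fin 2) then 1 else c (j + l.length)) := by
  intro l
  induction l with
  | nil =>
    intro j
    rcases fin2_cases i with h | h <;> subst h <;>
      simp [digits_nil, digits_cons_zero, digits_cons_one, digits]
  | cons i' l ih =>
    intro j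
    have e : j + 1 + l.length = j + (i' :: l).length := by simp; omega
    rcases fin2_cases i' with h | h <;> subst h
    · rw [List.cons_append, digits_cons_zero, ih (j + 1), digits_cons_zero, e]
    · rw [List.cons_append, digits_cons_one, ih (j + 1), digits_cons_one, e, mul_assoc]

theorem digits_inj_of_expand (hc : ∀ j, 1 < c j) (hsq : ∀ j, (c j) ^ 2 < c (j + 1)) :
    ∀ (n : ℕ) (l₁ l₂ : List (Fin 2)) (j : ℕ), l₁.length = n → l₂.length = n →
      digits c l₁ j = digits c l₂ j → l₁ = l₂ := by
  intro n
  induction n with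
  | zero =>
    intro l₁ l₂ j h1 h2 _
    rw [List.length_eq_zero_iff.mp h1, List.length_eq_zero_iff.mp h2]
  | succ m ih =>
    intro l₁ l₂ j h1 h2 heq
    rcases List.eq_nil_or_concat l₁ with rfl | ⟨u₁, i₁, rfl⟩
    · simp at h1
    rcases List.eq_nil_or_concat l₂ with rfl | ⟨u₂, i₂, rfl⟩
    · simp at h2
    simp only [List.concat_eq_append] at h1 h2 heq ⊢
    have hu₁ : u₁.length = m := by simpa using h1
    have hu₂ : u₂.length = m := by simpa using h2
    rw [digits_append, digits_append, hu₁, hu₂] at heq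
    have key : ∀ (u v : List (Fin 2)), u.length = m → v.length = m →
        digits c u j * c (j + m) = digits c v j → False := by
      intro u v hu hv he
      have hb : digits c v j < c (j + m) := by
        have := digits_lt_of_expand hc hsq v j
        rwa [hv] at this
      have h3 : c (j + m) ≤ digits c u j * c (j + m) :=
        le_mul_of_one_le_left' (digits_one_le hc u j)
      rw [he] at h3
      exact absurd h3 (not_le.mpr hb)
    rcases fin2_cases i₁ with h | h <;> rcases fin2_cases i₂ with h' | h' <;>
      subst h <;> subst h'
    · simp only [eq_self_iff_true, if_true, mul_one] at heq
      rw [ih u₁ u₂ j hu₁ hu₂ heq]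
    · simp only [eq_self_iff_true, if_true, mul_one, if_neg (by decide : (1 : Fin 2) ≠ 0)] at heq
      exact absurd heq.symm (fun he => key u₂ u₁ hu₂ hu₁ he)
    · simp only [eq_self_iff_true, if_true, mul_one, if_neg (by decide : (1 : Fin 2) ≠ 0)] at heq
      exact absurd heq (fun he => key u₁ u₂ hu₁ hu₂ he)
    · simp only [if_neg (by decide : (1 : Fin 2) ≠ 0)] at heq
      rw [ih u₁ u₂ j hu₁ hu₂ (mul_right_cancel heq)]

end DigitsExpand

end FM2Aux

namespace FM2Aux

variable {G : Type*} [Group G] [LinearOrder G]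
  [CovariantClass G G (· * ·) (· < ·)]
  [CovariantClass G G (Function.swap (· * ·)) (· < ·)]

theorem cg_lt_cg {g x y : G} (h : x < y) (k : ℕ) : cg g k x < cg g k y :=
  mul_lt_mul_left (mul_lt_mul_right h (g ^ k)) _

section FreeKernel

variable {L : Subgroup G}

/-- generic kernel for the freeness argument -/
theorem free_kernel {t : G} {F : Fin 2 → G} {c : ℕ → G}
    (Hprod : ∀ (l : List (Fin 2)) (j : ℕ),
      t ^ j * (l.map F).prod = digits c l j * t ^ (j + l.length))
    (HcL : ∀ j, c j ∈ L)
    (Hinj : ∀ (l₁ l₂ : List (Fin 2)), l₁.length = l₂.length →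
      digits c l₁ 0 = digits c l₂ 0 → l₁ = l₂)
    (Hnot : ∀ m : ℕ, m ≠ 0 → t ^ m ∉ L) :
    Function.Injective (FreeMonoid.lift F : FreeMonoid (Fin 2) →* G) := by
  have Hprod0 : ∀ l : List (Fin 2), (l.map F).prod = digits c l 0 * t ^ l.length := by
    intro l
    have := Hprod l 0
    simpa using this
  have claim : ∀ (l₁ l₂ : List (Fin 2)),
      digits c l₁ 0 * t ^ l₁.length = digits c l₂ 0 * t ^ l₂.length →
      l₂.length ≤ l₁.length → l₁ = l₂ := by
    intro l₁ l₂ he hle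
    have hsplit : t ^ l₁.length = t ^ (l₁.length - l₂.length) * t ^ l₂.length := by
      rw [← pow_add]
      congr 1
      omega
    rw [hsplit, ← mul_assoc] at he
    have he2 : digits c l₁ 0 * t ^ (l₁.length - l₂.length) = digits c l₂ 0 :=
      mul_right_cancel he
    have htL : t ^ (l₁.length - l₂.length) ∈ L := by
      have : t ^ (l₁.length - l₂.length) = (digits c l₁ 0)⁻¹ * digits c l₂ 0 := by
        rw [← he2]; group
      rw [this]
      exact L.mul_mem (L.inv_mem (digits_mem HcL l₁ 0)) (digits_mem HcL l₂ 0)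
    have hlen : l₁.length = l₂.length := by
      by_contra hne
      exact Hnot (l₁.length - l₂.length) (by omega) htL
    have he3 : digits c l₁ 0 = digits c l₂ 0 := by
      rw [hlen] at he2
      simpa using he2
    exact Hinj l₁ l₂ hlen he3
  intro x y h
  have h1 : (x.toList.map F).prod = (y.toList.map F).prod := by
    rw [FreeMonoid.lift_apply, FreeMonoid.lift_apply] at h
    exact h
  rw [Hprod0, Hprod0] at h1
  have h2 : x.toList = y.toList := by
    rcases le_total y.toList.length x.toList.length with hle | hle
    · exact claim _ _ h1 hle
    · exact (claim _ _ h1.symm hle).symm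
  calc x = FreeMonoid.ofList x.toList := (FreeMonoid.ofList_toList x).symm
    _ = FreeMonoid.ofList y.toList := by rw [h2]
    _ = y := FreeMonoid.ofList_toList y

/-- free monoid from a strong contraction -/
theorem free_contract (hLn : L.Normal) {a t : G} (ha1 : 1 < a) (haL : a ∈ L)
    (hcon : (t * a * t⁻¹) ^ 2 < a)
    (hnot : ∀ m : ℕ, m ≠ 0 → t ^ m ∉ L) :
    Function.Injective
      (FreeMonoid.lift (fun i : Fin 2 => if i = 0 then t else a * t) :
        FreeMonoid (Fin 2) →* G) := by
  set F : Fin 2 → G := fun i => if i = 0 then t else a * t with hF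
  set c : ℕ → G := fun j => cg t j a with hc
  have hc1 : ∀ j, 1 < c j := fun j => cg_one_lt ha1 j
  have hcsq : ∀ j, (c (j + 1)) ^ 2 < c j := by
    intro j
    have h1 : cg t j ((t * a * t⁻¹) ^ 2) < cg t j a := cg_lt_cg hcon j
    rw [cg_pow] at h1
    have e : cg t j (t * a * t⁻¹) = c (j + 1) := by
      show cg t j (t * a * t⁻¹) = cg t (j + 1) a
      have h2 := cg_succ (g := t) j a
      rw [cg_one] at h2
      exact h2.symm
    rwa [e] at h1
  have hcL : ∀ j, c j ∈ L := fun j => cg_mem hLn haL j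
  refine free_kernel (c := c) ?_ hcL
    (fun l₁ l₂ hlen he => digits_inj_of_contract hc1 hcsq l₁ l₂ 0 hlen he) hnot
  intro l j
  induction l generalizing j with
  | nil => simp [digits_nil]
  | cons i l ih =>
    rcases fin2_cases i with h | h <;> subst h
    · rw [List.map_cons, List.prod_cons, digits_cons_zero]
      have hF0 : F 0 = t := by rw [hF]; simp
      rw [hF0]
      calc t ^ j * (t * (l.map F).prod) = t ^ (j + 1) * (l.map F).prod := by
            rw [← mul_assoc, ← pow_succ]
        _ = digits c l (j + 1) * t ^ (j + 1 + l.length) := ih (j + 1)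
        _ = digits c l (j + 1) * t ^ (j + ((0 : Fin 2) :: l).length) := by
            have e2 : j + (l.length + 1) = j + 1 + l.length := by omega
            rw [List.length_cons, e2]
    · rw [List.map_cons, List.prod_cons, digits_cons_one]
      have hF1 : F 1 = a * t := by rw [hF]; simp
      rw [hF1]
      have e1 : t ^ j * (a * t * (l.map F).prod) = c j * (t ^ (j + 1) * (l.map F).prod) := by
        rw [hc]
        simp only [cg]
        rw [pow_succ]
        group
      rw [e1, ih (j + 1), ← mul_assoc, List.length_cons]
      have e2 : j + (l.length + 1) = j + 1 + l.length := by omega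
      rw [e2]

/-- free monoid from a strong expansion -/
theorem free_expand (hLn : L.Normal) {a t : G} (ha1 : 1 < a) (haL : a ∈ L)
    (hexp : a ^ 2 < t * a * t⁻¹)
    (hnot : ∀ m : ℕ, m ≠ 0 → t ^ m ∉ L) :
    Function.Injective
      (FreeMonoid.lift (fun i : Fin 2 => if i = 0 then t else t * a) :
        FreeMonoid (Fin 2) →* G) := by
  set F : Fin 2 → G := fun i => if i = 0 then t else t * a with hF
  set c : ℕ → G := fun j => cg t (j + 1) a with hc
  have hc1 : ∀ j, 1 < c j := fun j => cg_one_lt ha1 _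
  have hcsq : ∀ j, (c j) ^ 2 < c (j + 1) := by
    intro j
    have h1 : cg t (j + 1) (a ^ 2) < cg t (j + 1) (t * a * t⁻¹) := cg_lt_cg hexp (j + 1)
    rw [cg_pow] at h1
    have e : cg t (j + 1) (t * a * t⁻¹) = c (j + 1) := by
      show cg t (j + 1) (t * a * t⁻¹) = cg t (j + 1 + 1) a
      have h2 := cg_succ (g := t) (j + 1) a
      rw [cg_one] at h2
      exact h2.symm
    rwa [e] at h1
  have hcL : ∀ j, c j ∈ L := fun j => cg_mem hLn haL _
  refine free_kernel (c := c) ?_ hcL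
    (fun l₁ l₂ hlen he => digits_inj_of_expand hc1 hcsq l₁.length l₁ l₂ 0 rfl hlen.symm he)
    hnot
  intro l j
  induction l generalizing j with
  | nil => simp [digits_nil]
  | cons i l ih =>
    rcases fin2_cases i with h | h <;> subst h
    · rw [List.map_cons, List.prod_cons, digits_cons_zero]
      have hF0 : F 0 = t := by rw [hF]; simp
      rw [hF0]
      calc t ^ j * (t * (l.map F).prod) = t ^ (j + 1) * (l.map F).prod := by
            rw [← mul_assoc, ← pow_succ]
        _ = digits c l (j + 1) * t ^ (j + 1 + l.length) := ih (j + 1)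
        _ = digits c l (j + 1) * t ^ (j + ((0 : Fin 2) :: l).length) := by
            have e2 : j + (l.length + 1) = j + 1 + l.length := by omega
            rw [List.length_cons, e2]
    · rw [List.map_cons, List.prod_cons, digits_cons_one]
      have hF1 : F 1 = t * a := by rw [hF]; simp
      rw [hF1]
      have e1 : t ^ j * (t * a * (l.map F).prod) = c j * (t ^ (j + 1) * (l.map F).prod) := by
        rw [hc]
        simp only [cg]
        rw [pow_succ]
        group
      rw [e1, ih (j + 1), ← mul_assoc, List.length_cons]
      have e2 : j + (l.length + 1) = j + 1 + l.length := by omega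
      rw [e2]

end FreeKernel

end FM2Aux


open FM2Aux
open scoped commutatorElement

/-- Let `(G,<)` be an ordered group possessing a convex jump `(B, L)` such
that both `B` and `L` are normal in `G` and `[L,G] ⊄ B`. Then `G` contains a noncommutative
free monoid: there exist `a, b ∈ G` with `1 < a` and `1 < b` generating a free monoid of
rank 2. -/
theorem free_monoid_of_noncentral_normal_convex_jump (G : Type*) [Group G] [LinearOrder G]
    [CovariantClass G G (· * ·) (· < ·)]
    [CovariantClass G G (Function.swap (· * ·)) (· < ·)]
    (B L : Subgroup G) (hjump : B.IsConvexJump L)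
    (hBnormal : B.Normal) (hLnormal : L.Normal)
    (hnc : ¬ ⁅L, (⊤ : Subgroup G)⁆ ≤ B) :
    ∃ a b : G, 1 < a ∧ 1 < b ∧ GeneratesFreeMonoid2 a b := by

  have hBc : B.IsConvex := hjump.1
  -- extract a noncommuting pair
  have hnc' : ¬ ∀ g₁ ∈ L, ∀ g₂ ∈ (⊤ : Subgroup G), ⁅g₁, g₂⁆ ∈ B :=
    fun h => hnc (Subgroup.commutator_le.mpr h)
  push_neg at hnc'
  obtain ⟨f₀, hf₀L, g₀, -, hcomm⟩ := hnc'
  set d₀ : G := f₀⁻¹ * (g₀ * f₀ * g₀⁻¹) with hd₀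
  have hd₀B : d₀ ∉ B := by
    intro hd
    apply hcomm
    have e : ⁅f₀, g₀⁆ = f₀ * d₀⁻¹ * f₀⁻¹ := by
      rw [commutatorElement_def, hd₀]
      group
    rw [e]
    exact hBnormal.conj_mem _ (B.inv_mem hd) f₀
  have hf₀B : f₀ ∉ B := by
    intro h
    exact hd₀B (B.mul_mem (B.inv_mem h) (hBnormal.conj_mem _ h g₀))
  -- conversions between d₀ and LTb statements
  have hcg1 : cg g₀ 1 f₀ = g₀ * f₀ * g₀⁻¹ := cg_one f₀
  have hdlt : Pos B d₀ → LTb B f₀ (cg g₀ 1 f₀) := by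
    intro h
    unfold LTb
    rw [hcg1]
    exact h
  have hdlt' : Pos B d₀⁻¹ → LTb B (cg g₀ 1 f₀) f₀ := by
    intro h
    unfold LTb
    rw [hcg1]
    have e : d₀⁻¹ = (g₀ * f₀ * g₀⁻¹)⁻¹ * f₀ := by rw [hd₀]; group
    rwa [e] at h
  -- a helper to flip an expansion into a contraction
  have flip : ∀ (f g' : G), LTb B f (cg g' 1 f) → LTb B (cg g'⁻¹ 1 f) f := by
    intro f g' h
    have h1 := h.cg hBnormal (g := g'⁻¹) 1
    have e : cg g'⁻¹ 1 (cg g' 1 f) = f := by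
      simp only [cg, pow_one]
      group
    rwa [e] at h1
  -- produce the normalized pair (f, g)
  obtain ⟨f, g, hfP, hfL, hstep⟩ :
      ∃ f g : G, Pos B f ∧ f ∈ L ∧ LTb B (cg g 1 f) f := by
    rcases pos_trichot hBc f₀ with hf | hf | hf
    · rcases pos_trichot hBc d₀ with hd | hd | hd
      · exact ⟨f₀, g₀⁻¹, hf, hf₀L, flip f₀ g₀ (hdlt hd)⟩
      · exact ⟨f₀, g₀, hf, hf₀L, hdlt' hd⟩
      · exact absurd hd hd₀B
    · have hfiL : f₀⁻¹ ∈ L := L.inv_mem hf₀L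
      rcases pos_trichot hBc d₀ with hd | hd | hd
      · have h1 : LTb B (cg g₀ 1 f₀⁻¹) f₀⁻¹ := by
          have := (hdlt hd).inv hBnormal
          rwa [← cg_inv] at this
        exact ⟨f₀⁻¹, g₀, hf, hfiL, h1⟩
      · have h1 : LTb B f₀⁻¹ (cg g₀ 1 f₀⁻¹) := by
          have := (hdlt' hd).inv hBnormal
          rwa [← cg_inv] at this
        exact ⟨f₀⁻¹, g₀⁻¹, hf, hfiL, flip f₀⁻¹ g₀ h1⟩
      · exact absurd hd hd₀B
    · exact absurd hf hf₀B
  -- main key lemma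
  obtain ⟨K, hK0, hKlt⟩ := key hjump hBnormal hLnormal hfP hfL hstep
  set t₀ : G := g ^ K with ht₀
  have hmain : (t₀ * f * t₀⁻¹) ^ 2 < f := hKlt
  have hf1 : 1 < f := hfP.one_lt
  -- t₀ powers escape L
  have hnotL : ∀ m : ℕ, m ≠ 0 → t₀ ^ m ∉ L := by
    intro m hm htL
    -- iterated contraction chain
    have hsq : ∀ j : ℕ, (cg t₀ (j + 1) f) ^ 2 < cg t₀ j f := by
      intro j
      have h1 : cg t₀ j ((t₀ * f * t₀⁻¹) ^ 2) < cg t₀ j f := cg_lt_cg hmain j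
      rw [cg_pow] at h1
      have h2 := cg_succ (g := t₀) j f
      rw [cg_one] at h2
      rwa [← h2] at h1
    have hone : ∀ j : ℕ, 1 < cg t₀ j f := fun j => cg_one_lt hf1 j
    have hlt : ∀ j : ℕ, cg t₀ (j + 1) f < cg t₀ j f := by
      intro j
      calc cg t₀ (j + 1) f ≤ (cg t₀ (j + 1) f) ^ 2 := by
            rw [sq]
            exact le_mul_of_one_le_right' (hone (j + 1)).le
        _ < cg t₀ j f := hsq j
    have hle : ∀ j : ℕ, cg t₀ j f ≤ f := by
      intro j
      induction j with
      | zero => simp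
      | succ m ih => exact le_trans (hlt m).le ih
    rcases Nat.exists_eq_succ_of_ne_zero hm with ⟨m', rfl⟩
    have hfinal : (t₀ ^ (m' + 1) * f * (t₀ ^ (m' + 1))⁻¹) ^ 2 < f := by
      calc (t₀ ^ (m' + 1) * f * (t₀ ^ (m' + 1))⁻¹) ^ 2 = (cg t₀ (m' + 1) f) ^ 2 := rfl
        _ < cg t₀ m' f := hsq m'
        _ ≤ f := hle m'
    exact noDom hjump hBnormal hfL hfP htL hfinal
  -- t₀ ≠ 1
  have ht₀ne : t₀ ≠ 1 := by
    intro h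
    rw [h] at hmain
    simp only [one_mul, inv_one, mul_one] at hmain
    have : f ≤ f ^ 2 := by
      rw [sq]
      exact le_mul_of_one_le_right' hf1.le
    exact absurd hmain (not_lt.mpr this)
  rcases lt_trichotomy t₀ 1 with ht | ht | ht
  · -- expansion case with t = t₀⁻¹
    set t : G := t₀⁻¹ with htdef
    have ht1 : 1 < t := by
      have := mul_lt_mul_right ht t₀⁻¹
      simpa [htdef] using this
    have hexp : f ^ 2 < t * f * t⁻¹ := by
      have h1 := mul_lt_mul_left (mul_lt_mul_right hmain t₀⁻¹) t₀
      have e : t₀⁻¹ * ((t₀ * f * t₀⁻¹) ^ 2) * t₀ = f ^ 2 := by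
        rw [sq, sq]
        group
      rw [e] at h1
      show f ^ 2 < t₀⁻¹ * f * (t₀⁻¹)⁻¹
      rwa [inv_inv]
    have hnot : ∀ m : ℕ, m ≠ 0 → t ^ m ∉ L := by
      intro m hm htmL
      apply hnotL m hm
      rw [htdef, inv_pow] at htmL
      exact (L.inv_mem_iff).mp htmL
    refine ⟨t, t * f, ht1, ?_, ?_⟩
    · calc (1 : G) < t := ht1
        _ = t * 1 := (mul_one t).symm
        _ < t * f := mul_lt_mul_right hf1 t
    · exact free_expand hLnormal hf1 hfL hexp hnot
  · exact absurd ht ht₀ne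
  · -- contraction case with t = t₀
    refine ⟨t₀, f * t₀, ht, ?_, ?_⟩
    · calc (1 : G) < t₀ := ht
        _ = 1 * t₀ := (one_mul t₀).symm
        _ < f * t₀ := mul_lt_mul_left hf1 t₀
    · exact free_contract hLnormal hf1 hfL hmain hnotL
end
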